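/- arXiv:1904.12256 — 7 statements merged into one kernel-verified Lean document; each statement's English description precedes it below -/
import Mathlib

section
/- For an [n,k] linear code C over a finite field with k > 0, the generalized Hamming weights satisfy the strict monotonicity chain 1 ≤ d₁(C) < d₂(C) < ⋯ < d_k(C) ≤ n. -/
/-- The support of a subcode. -/
def codeSupport {F : Type*} [Field F] {n : ℕ} (D : Submodule F (Fin n → F)) : Set (Fin n) :=
  {i | ∃ x ∈ D, x i ≠ 0}

/-- The `l`-th generalized Hamming weight of a linear code `C ⊆ F^n`: the minimum support
size of an `l`-dimensional subcode. -/
noncomputable def ghw {F : Type*} [Field F] {n : ℕ} (C : Submodule F (Fin n → F)) (l : ℕ) : ℕ :=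
  sInf {k | ∃ D : Submodule F (Fin n → F), D ≤ C ∧ Module.finrank F D = l ∧
    (codeSupport D).ncard = k}

lemma ghw_exists_subcode {F : Type*} [Field F] {n : ℕ} (C : Submodule F (Fin n → F)) (m : ℕ)
    (hm : m ≤ Module.finrank F C) :
    ∃ D : Submodule F (Fin n → F), D ≤ C ∧ Module.finrank F D = m := by
  obtain ⟨f, hf⟩ := exists_linearIndependent_of_le_finrank (R := F) (M := C) hm
  have hg : LinearIndependent F (C.subtype ∘ f) := hf.map' C.subtype C.ker_subtype
  refine ⟨Submodule.span F (Set.range (C.subtype ∘ f)), ?_, ?_⟩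
  · rw [Submodule.span_le]; rintro _ ⟨j, rfl⟩; exact (f j).2
  · rw [finrank_span_eq_card hg, Fintype.card_fin]

lemma codeSupport_nonempty {F : Type*} [Field F] {n : ℕ} {D : Submodule F (Fin n → F)}
    (hD : Module.finrank F D ≠ 0) : (codeSupport D).Nonempty := by
  have hbot : D ≠ ⊥ := by
    rintro rfl; exact hD (by simp)
  obtain ⟨x, hxD, hx⟩ := Submodule.exists_mem_ne_zero_of_ne_bot hbot
  obtain ⟨i, hi⟩ := Function.ne_iff.mp hx
  exact ⟨i, x, hxD, hi⟩

lemma ghw_key {F : Type*} [Field F] {n : ℕ} {D : Submodule F (Fin n → F)} {i : Fin n}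
    (hi : i ∈ codeSupport D) :
    ∃ D' : Submodule F (Fin n → F), D' ≤ D ∧
      Module.finrank F D' + 1 = Module.finrank F D ∧
      codeSupport D' ⊆ codeSupport D \ {i} := by
  obtain ⟨x, hxD, hxi⟩ := hi
  set φ : (Fin n → F) →ₗ[F] F := LinearMap.proj i
  set ψ : D →ₗ[F] F := φ.comp D.subtype
  refine ⟨LinearMap.ker φ ⊓ D, inf_le_right, ?_, ?_⟩
  · have hker : (LinearMap.ker ψ).map D.subtype = LinearMap.ker φ ⊓ D := by
      rw [show LinearMap.ker ψ = Submodule.comap D.subtype (LinearMap.ker φ) from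
        LinearMap.ker_comp _ _, Submodule.map_comap_subtype, inf_comm]
    have hrank : Module.finrank F (LinearMap.ker φ ⊓ D : Submodule F (Fin n → F))
        = Module.finrank F (LinearMap.ker ψ) := by
      rw [← hker, Submodule.finrank_map_subtype_eq]
    have hsurj : LinearMap.range ψ = ⊤ := by
      rw [eq_top_iff]
      intro a _
      refine ⟨(a * (x i)⁻¹) • ⟨x, hxD⟩, ?_⟩
      simp [ψ, φ, mul_assoc, inv_mul_cancel₀ hxi]
    have := LinearMap.finrank_range_add_finrank_ker ψ
    rw [hsurj, finrank_top, Module.finrank_self] at this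
    rw [hrank, add_comm]
    exact this
  · rintro j ⟨y, ⟨hy1, hy2⟩, hyj⟩
    refine ⟨⟨y, hy2, hyj⟩, ?_⟩
    rintro rfl
    exact hyj hy1

/-- For an `[n, k]` linear code `C` over a finite field with `k > 0`, the generalized Hamming
weights satisfy `1 ≤ d₁(C) < d₂(C) < ⋯ < d_k(C) ≤ n`. -/
theorem ghw_strict_mono {F : Type*} [Field F] [Fintype F] {n : ℕ}
    (C : Submodule F (Fin n → F)) (hk : 0 < Module.finrank F C) :
    1 ≤ ghw C 1 ∧
      (∀ l : ℕ, 1 ≤ l → l + 1 ≤ Module.finrank F C → ghw C l < ghw C (l + 1)) ∧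
      ghw C (Module.finrank F C) ≤ n := by
  have hne : ∀ m : ℕ, m ≤ Module.finrank F C →
      {k | ∃ D : Submodule F (Fin n → F), D ≤ C ∧ Module.finrank F D = m ∧
        (codeSupport D).ncard = k}.Nonempty := by
    intro m hm
    obtain ⟨D, hD, hDm⟩ := ghw_exists_subcode C m hm
    exact ⟨(codeSupport D).ncard, D, hD, hDm, rfl⟩
  refine ⟨?_, ?_, ?_⟩
  · obtain ⟨D, hD, hD1, hcard⟩ := Nat.sInf_mem (hne 1 hk)
    rw [ghw, ← hcard]
    have := codeSupport_nonempty (n := n) (D := D) (by rw [hD1]; exact one_ne_zero)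
    exact (Set.ncard_pos (Set.toFinite _)).mpr this
  · intro l hl hlk
    obtain ⟨D, hD, hDl, hcard⟩ := Nat.sInf_mem (hne (l + 1) hlk)
    obtain ⟨i, hi⟩ := codeSupport_nonempty (n := n) (D := D) (by rw [hDl]; exact Nat.succ_ne_zero l)
    obtain ⟨D', hD'D, hD'rank, hD'supp⟩ := ghw_key hi
    have hrank' : Module.finrank F D' = l := by omega
    have h1 : ghw C l ≤ (codeSupport D').ncard :=
      Nat.sInf_le ⟨D', hD'D.trans hD, hrank', rfl⟩
    have h2 : (codeSupport D').ncard < (codeSupport D).ncard := by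
      calc (codeSupport D').ncard ≤ (codeSupport D \ {i}).ncard :=
            Set.ncard_le_ncard hD'supp (Set.toFinite _)
        _ < (codeSupport D).ncard :=
            Set.ncard_diff_singleton_lt_of_mem hi (Set.toFinite _)
    calc ghw C l ≤ (codeSupport D').ncard := h1
      _ < (codeSupport D).ncard := h2
      _ = ghw C (l + 1) := hcard
  · have : ghw C (Module.finrank F C) ≤ (codeSupport C).ncard :=
      Nat.sInf_le ⟨C, le_rfl, rfl, rfl⟩
    refine this.trans ?_
    calc (codeSupport C).ncard ≤ (Set.univ : Set (Fin n)).ncard :=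
          Set.ncard_le_ncard (Set.subset_univ _) (Set.toFinite _)
      _ = n := by rw [Set.ncard_univ, Nat.card_eq_fintype_card, Fintype.card_fin]
end

section
/- Let C ⊆ F^n be a linear code with parity check matrix H having columns h₁,…,h_n. Then for each l with 1 ≤ l ≤ dim C, d_l(C) = min{ |I| : I ⊆ {1,…,n}, |I| − rank(span{h_i : i ∈ I}) ≥ l }. -/
open Module Submodule

section Aux

variable {F : Type*} [Field F] {n : ℕ}

/-- The coordinate subspace of vectors supported on `I`. -/
def coordSub (F : Type*) [Field F] {n : ℕ} (I : Set (Fin n)) : Submodule F (Fin n → F) where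
  carrier := {x | ∀ i ∉ I, x i = 0}
  add_mem' := by intro a b ha hb i hi; simp [ha i hi, hb i hi]
  zero_mem' := by intro i _; rfl
  smul_mem' := by intro c a ha i hi; simp [ha i hi]

lemma coordSub_eq_span (I : Set (Fin n)) :
    coordSub F I = span F ((fun i => Pi.single i (1 : F)) '' I) := by
  apply le_antisymm
  · intro x hx
    have hdecomp : x = ∑ i, Pi.single i (x i) := (Finset.univ_sum_single x).symm
    rw [hdecomp]
    refine Submodule.sum_mem _ fun i _ => ?_
    by_cases hi : i ∈ I
    · have : Pi.single i (x i) = x i • (Pi.single i 1 : Fin n → F) := by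
        rw [← Pi.single_smul, smul_eq_mul, mul_one]
      rw [this]
      exact Submodule.smul_mem _ _ (subset_span ⟨i, hi, rfl⟩)
    · rw [hx i hi]
      simp only [Pi.single_zero]
      exact zero_mem _
  · rw [span_le]
    rintro _ ⟨i, hi, rfl⟩ j hj
    have : j ≠ i := by rintro rfl; exact hj hi
    simp [Pi.single_eq_of_ne this]

lemma single_one_injective : Function.Injective (fun i : Fin n => Pi.single i (1 : F)) := by
  intro i j h
  have h2 : (Pi.single i 1 : Fin n → F) = Pi.single j 1 := h
  by_contra hne
  have h3 := congrFun h2 i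
  rw [Pi.single_eq_same, Pi.single_eq_of_ne hne] at h3
  exact one_ne_zero h3

lemma linearIndependent_single_one :
    LinearIndependent F (fun i : Fin n => Pi.single i (1 : F)) := by
  have := (Pi.basisFun F (Fin n)).linearIndependent
  convert this using 1
  funext i
  rw [Pi.basisFun_apply]

set_option maxHeartbeats 1000000 in
lemma finrank_coordSub (I : Finset (Fin n)) :
    finrank F (coordSub F (I : Set (Fin n))) = I.card := by
  classical
  have hli : LinearIndependent F
      (fun i : (I : Set (Fin n)) => (Pi.single (i : Fin n) 1 : Fin n → F)) :=
    linearIndependent_single_one.comp _ Subtype.val_injective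
  have hr : (fun i => Pi.single i (1 : F)) '' (I : Set (Fin n)) =
      Set.range (fun i : (I : Set (Fin n)) => (Pi.single (i : Fin n) 1 : Fin n → F)) := by
    rw [← Set.range_restrict]; rfl
  rw [coordSub_eq_span, hr, finrank_span_eq_card hli]
  simp

variable {m₀ : ℕ}

lemma mulVecLin_single_one (H : Matrix (Fin m₀) (Fin n) F) (i : Fin n) :
    H.mulVecLin (Pi.single i (1 : F)) = H.transpose i := by
  ext j
  simp [Matrix.mulVecLin_apply, Matrix.mulVec_single, Matrix.transpose_apply]

/-- Rank-nullity for the restriction of `H` to the coordinate subspace on `I`. -/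
lemma key_rank_eq (H : Matrix (Fin m₀) (Fin n) F) (I : Finset (Fin n)) :
    finrank F (span F (H.transpose '' (I : Set (Fin n)))) +
      finrank F ((coordSub F (I : Set (Fin n))) ⊓ LinearMap.ker H.mulVecLin :
        Submodule F (Fin n → F)) = I.card := by
  classical
  set V := coordSub F (I : Set (Fin n)) with hV
  set g := H.mulVecLin.domRestrict V with hg
  have hrange : LinearMap.range g = map H.mulVecLin V := by
    rw [hg, LinearMap.range_domRestrict]
  have hmap : map H.mulVecLin V = span F (H.transpose '' (I : Set (Fin n))) := by
    rw [hV, coordSub_eq_span, Submodule.map_span, ← Set.image_comp]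
    congr 1
    apply Set.image_congr
    intro i _
    exact mulVecLin_single_one H i
  have hker : finrank F (LinearMap.ker g) =
      finrank F (V ⊓ LinearMap.ker H.mulVecLin : Submodule F (Fin n → F)) := by
    rw [hg, LinearMap.ker_domRestrict]
    have : comap V.subtype (LinearMap.ker H.mulVecLin) =
        comap V.subtype (V ⊓ LinearMap.ker H.mulVecLin) := by
      rw [Submodule.comap_inf, Submodule.comap_subtype_self, top_inf_eq]
    rw [this]
    exact (Submodule.comapSubtypeEquivOfLe inf_le_left).finrank_eq
  have hrn := LinearMap.finrank_range_add_finrank_ker g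
  rw [hrange, hmap, hker] at hrn
  rw [hrn, finrank_coordSub]

/-- In a finite-dimensional space, any submodule of dimension `≥ l` contains a submodule of
dimension exactly `l`. -/
lemma exists_submodule_finrank_eq {M : Type*} [AddCommGroup M] [Module F M]
    [FiniteDimensional F M] (W : Submodule F M) {l : ℕ} (h : l ≤ finrank F W) :
    ∃ D : Submodule F M, D ≤ W ∧ finrank F D = l := by
  have b := Module.finBasis F W
  set c : Fin l → M := fun i => (b (Fin.castLE h i) : M) with hc
  have hli : LinearIndependent F c := by
    have h1 : LinearIndependent F (fun i : Fin l => b (Fin.castLE h i)) :=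
      b.linearIndependent.comp _ (Fin.castLE_injective h)
    have h2 := h1.map' W.subtype (Submodule.ker_subtype W)
    exact h2
  refine ⟨span F (Set.range c), ?_, ?_⟩
  · rw [span_le]
    rintro _ ⟨i, rfl⟩
    exact (b (Fin.castLE h i)).2
  · rw [finrank_span_eq_card hli, Fintype.card_fin]

end Aux

/-- Wei's duality description: if `C = ker H` for a parity check matrix `H` with columns
`h₁, …, h_n`, then `d_l(C) = min { |I| : |I| - rank ⟨h_i : i ∈ I⟩ ≥ l }`. -/
theorem ghw_eq_min_card_dependent_columns {F : Type*} [Field F] [Fintype F] {m₀ n : ℕ}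
    (H : Matrix (Fin m₀) (Fin n) F) :
    ∀ l : ℕ, 1 ≤ l → l ≤ Module.finrank F (LinearMap.ker H.mulVecLin) →
      ghw (LinearMap.ker H.mulVecLin) l =
        sInf {k | ∃ I : Finset (Fin n), I.card = k ∧
          Module.finrank F (Submodule.span F (H.transpose '' (I : Set (Fin n)))) + l ≤ I.card} := by
  intro l hl1 hl2
  classical
  set C := LinearMap.ker H.mulVecLin with hC
  -- the RHS set is nonempty: take I = univ
  have hRne : {k | ∃ I : Finset (Fin n), I.card = k ∧
      Module.finrank F (Submodule.span F (H.transpose '' (I : Set (Fin n)))) + l ≤ I.card}.Nonempty := by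
    refine ⟨(Finset.univ : Finset (Fin n)).card, Finset.univ, rfl, ?_⟩
    have hcoe : ((Finset.univ : Finset (Fin n)) : Set (Fin n)) = Set.univ := Finset.coe_univ
    rw [hcoe, Set.image_univ (f := H.transpose)]
    have hrn := LinearMap.finrank_range_add_finrank_ker H.mulVecLin
    rw [Matrix.range_mulVecLin] at hrn
    have hn : finrank F (Fin n → F) = n := by simp
    rw [hn, ← hC] at hrn
    have hcard : (Finset.univ : Finset (Fin n)).card = n := by simp
    rw [show H.col = H.transpose from rfl] at hrn
    omega
  apply le_antisymm
  · -- ghw ≤ sInf RHS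
    obtain ⟨I, hIcard, hIrank⟩ := Nat.sInf_mem hRne
    set W := (coordSub F (I : Set (Fin n))) ⊓ C with hW
    have hkey := key_rank_eq H I
    rw [← hC, ← hW] at hkey
    have hlW : l ≤ finrank F W := by omega
    obtain ⟨D, hDW, hDl⟩ := exists_submodule_finrank_eq W hlW
    have hDC : D ≤ C := le_trans hDW inf_le_right
    have hmem : (codeSupport D).ncard ∈ {k | ∃ D' : Submodule F (Fin n → F), D' ≤ C ∧
        Module.finrank F D' = l ∧ (codeSupport D').ncard = k} := ⟨D, hDC, hDl, rfl⟩
    have h1 : ghw C l ≤ (codeSupport D).ncard := Nat.sInf_le hmem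
    have hsub : codeSupport D ⊆ (I : Set (Fin n)) := by
      rintro i ⟨x, hxD, hxi⟩
      by_contra hi
      exact hxi ((hDW hxD).1 i hi)
    have h2 : (codeSupport D).ncard ≤ I.card := by
      have := Set.ncard_le_ncard hsub (Set.toFinite _)
      rwa [Set.ncard_coe_finset] at this
    omega
  · -- sInf RHS ≤ ghw
    -- LHS set is nonempty
    have hLne : {k | ∃ D : Submodule F (Fin n → F), D ≤ C ∧
        Module.finrank F D = l ∧ (codeSupport D).ncard = k}.Nonempty := by
      obtain ⟨D, hDC, hDl⟩ := exists_submodule_finrank_eq C hl2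
      exact ⟨(codeSupport D).ncard, D, hDC, hDl, rfl⟩
    obtain ⟨D, hDC, hDl, hDcard⟩ := Nat.sInf_mem hLne
    set S := codeSupport D with hS
    have hSfin : S.Finite := Set.toFinite _
    set I := hSfin.toFinset with hI
    have hIS : (I : Set (Fin n)) = S := hSfin.coe_toFinset
    have hIcard : I.card = ghw C l := by
      unfold ghw
      rw [← hDcard, Set.ncard_eq_toFinset_card S hSfin]
    refine Nat.sInf_le ⟨I, hIcard, ?_⟩
    have hDle : D ≤ (coordSub F (I : Set (Fin n))) ⊓ C := by
      refine le_inf ?_ hDC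
      intro x hx i hi
      rw [hIS] at hi
      by_contra hxi
      exact hi ⟨x, hx, hxi⟩
    have hkey := key_rank_eq H I
    rw [← hC] at hkey
    have hmono : finrank F D ≤
        finrank F ((coordSub F (I : Set (Fin n))) ⊓ C : Submodule F (Fin n → F)) :=
      Submodule.finrank_mono hDle
    omega
end

section
/- Let H = [Hᵢⱼ] (i,j = 1,…,γ) be a block matrix over a field where Hᵢⱼ = αⱼ^{i−1} Bᵢⱼ, Bᵢⱼ is the wᵢ × wⱼ matrix with (s,t)-entry β_{j,t}^{s−1}, the αⱼ are pairwise distinct, and for each j the elements β_{j,1},…,β_{j,wⱼ} are pairwise distinct, with w₁ ≥ w₂ ≥ ⋯ ≥ w_γ ≥ 1. Then det(H) = (∏_{i=1}^{γ} det(B_{i,i})) · (∏_{j=2}^{γ} ρⱼ^{wⱼ}) where ρⱼ = ∏_{i=1}^{j−1}(αⱼ − αᵢ); in particular H is invertible. -/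
open Finset

/-- Σ over Fin (n+1) splits off the zero fiber. -/
def sigmaFinSuccEquiv {n : ℕ} (π : Fin (n + 1) → Type*) :
    ((j : Fin (n + 1)) × π j) ≃ (π 0 ⊕ ((j : Fin n) × π j.succ)) where
  toFun x := Fin.cases (motive := fun j => π j → π 0 ⊕ ((j : Fin n) × π j.succ))
    (fun s => Sum.inl s) (fun j s => Sum.inr ⟨j, s⟩) x.1 x.2
  invFun := Sum.elim (fun s => ⟨0, s⟩) (fun p => ⟨p.1.succ, p.2⟩)
  left_inv := by rintro ⟨j, s⟩; induction j using Fin.cases <;> simp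
  right_inv := by rintro (s | ⟨j, s⟩) <;> simp

@[simp] lemma sigmaFinSuccEquiv_symm_inl {n : ℕ} (π : Fin (n + 1) → Type*) (s : π 0) :
    (sigmaFinSuccEquiv π).symm (Sum.inl s) = ⟨0, s⟩ := rfl

@[simp] lemma sigmaFinSuccEquiv_symm_inr {n : ℕ} (π : Fin (n + 1) → Type*)
    (p : (j : Fin n) × π j.succ) :
    (sigmaFinSuccEquiv π).symm (Sum.inr p) = ⟨p.1.succ, p.2⟩ := rfl

lemma prod_filter_lt_succ {n : ℕ} {M : Type*} [CommMonoid M] (f : Fin (n + 1) → M)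
    (j : Fin n) :
    ∏ i ∈ univ.filter (· < j.succ), f i = f 0 * ∏ i ∈ univ.filter (· < j), f i.succ := by
  have h : (univ.filter (· < j.succ) : Finset (Fin (n+1)))
      = insert 0 ((univ.filter (· < j)).image Fin.succ) := by
    ext i
    simp only [mem_filter, mem_univ, true_and, mem_insert, mem_image]
    induction i using Fin.cases with
    | zero => simp [Fin.succ_pos]
    | succ k => simp [Fin.succ_lt_succ_iff, Fin.succ_inj, eq_comm, Fin.succ_ne_zero]
  rw [h, prod_insert, prod_image]
  · intro a _ b _ hab; exact Fin.succ_injective _ hab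
  · simp [Fin.succ_ne_zero]

lemma aux_det {F : Type*} [Field F] : ∀ (γ : ℕ) (w : Fin γ → ℕ)
    (_hw : ∀ i j : Fin γ, i ≤ j → w j ≤ w i) (α : Fin γ → F)
    (β : (j : Fin γ) → Fin (w j) → F)
    (H : Matrix ((j : Fin γ) × Fin (w j)) ((j : Fin γ) × Fin (w j)) F)
    (_hH : ∀ r c : (j : Fin γ) × Fin (w j),
      H r c = α c.1 ^ (r.1 : ℕ) * β c.1 c.2 ^ (r.2 : ℕ)),
    H.det = (∏ i : Fin γ, (Matrix.of fun s t : Fin (w i) => β i t ^ (s : ℕ)).det) *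
        ∏ j : Fin γ, (∏ i ∈ Finset.univ.filter (· < j), (α j - α i)) ^ (w j)
  | 0, w, hw, α, β, H, hH => by
      haveI : IsEmpty ((j : Fin 0) × Fin (w j)) := by
        constructor; rintro ⟨j, _⟩; exact j.elim0
      simp [Matrix.det_isEmpty]
  | (γ+1), w, hw, α, β, H, hH => by
      classical
      let ι := (j : Fin (γ+1)) × Fin (w j)
      have hwle : ∀ (j : Fin (γ+1)) (h : j ≠ 0), w j ≤ w ((j.pred h).castSucc) :=
        fun j h => hw _ _ (le_of_lt (Fin.castSucc_pred_lt h))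
      let pr : (r : ι) → r.1 ≠ 0 → ι :=
        fun r h => ⟨(r.1.pred h).castSucc, Fin.castLE (hwle r.1 h) r.2⟩
      let N : Matrix ι ι F := Matrix.of fun r r' =>
        if h : r.1 = 0 then (0 : F) else if r' = pr r h then 1 else 0
      let E : Matrix ι ι F := 1 - α 0 • N
      -- entries of `E * H`
      have hNH : ∀ r c : ι, (N * H) r c = if h : r.1 = 0 then 0 else H (pr r h) c := by
        intro r c
        rw [Matrix.mul_apply]
        by_cases h : r.1 = 0
        · simp [N, h]
        · simp only [N, Matrix.of_apply, dif_neg h, ite_mul, one_mul, zero_mul]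
          rw [Finset.sum_ite_eq' Finset.univ (pr r h) (fun r' => H r' c)]
          simp [h]
      have hG : ∀ r c : ι, (E * H) r c
          = H r c - α 0 * (if h : r.1 = 0 then 0 else H (pr r h) c) := by
        intro r c
        rw [show E * H = H - α 0 • (N * H) by
          simp [E, Matrix.sub_mul, Matrix.smul_mul, Matrix.one_mul]]
        simp [hNH r c]
      -- det E = 1
      have hN0 : ∀ (r r' : ι), ¬ ((r'.1 : ℕ) < (r.1 : ℕ)) → N r r' = 0 := by
        intro r r' hlt
        by_cases h : r.1 = 0
        · simp [N, h]
        · simp only [N, Matrix.of_apply, dif_neg h]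
          rw [if_neg]
          intro he
          apply hlt
          have : (r'.1 : ℕ) = ((r.1.pred h).castSucc : ℕ) := by rw [he]
          have h2 : (r.1 : ℕ) ≠ 0 := fun hh => h (Fin.ext hh)
          simp only [Fin.coe_castSucc, Fin.coe_pred] at this
          omega
      have hdetE : E.det = 1 := by
        have ht : E.transpose.BlockTriangular (fun r : ι => (r.1 : ℕ)) := by
          intro r r' hlt
          have hlt' : (r'.1 : ℕ) < (r.1 : ℕ) := hlt
          have hne : r' ≠ r := by rintro rfl; exact lt_irrefl _ hlt'
          have hN : N r' r = 0 := hN0 r' r (by omega)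
          simp only [Matrix.transpose_apply, E, Matrix.sub_apply, Matrix.one_apply,
            Matrix.smul_apply, smul_eq_mul, hN, mul_zero, sub_zero, if_neg hne]
        rw [← Matrix.det_transpose, ht.det]
        apply Finset.prod_eq_one
        intro a _
        have hblock : E.transpose.toSquareBlock (fun r : ι => (r.1 : ℕ)) a = 1 := by
          ext ⟨r, hr⟩ ⟨r', hr'⟩
          have hr2 : (r.1 : ℕ) = a := hr
          have hr2' : (r'.1 : ℕ) = a := hr'
          have hN : N r' r = 0 := hN0 r' r (by omega)
          simp only [Matrix.toSquareBlock_def, Matrix.of_apply, Matrix.transpose_apply, E,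
            Matrix.sub_apply, Matrix.smul_apply, Matrix.one_apply, hN,
            smul_eq_mul, mul_zero, sub_zero]
          by_cases he : r = r'
          · subst he; simp
          · rw [if_neg (fun hc => he hc.symm), if_neg
              (fun hc : (⟨r, hr⟩ : {x : ι // ((x.1 : ℕ) = a)}) = ⟨r', hr'⟩ =>
                he (by simpa [Subtype.ext_iff] using hc))]
        rw [hblock, Matrix.det_one]
      -- reindex
      have hdetH : H.det = (E * H).det := by
        rw [Matrix.det_mul, hdetE, one_mul]
      let e := sigmaFinSuccEquiv (fun j => Fin (w j))
      let A : Matrix (Fin (w 0)) (Fin (w 0)) F := Matrix.of fun s t => β 0 t ^ (s : ℕ)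
      let Bm : Matrix (Fin (w 0)) ((j : Fin γ) × Fin (w j.succ)) F :=
        Matrix.of fun s c => β c.1.succ c.2 ^ (s : ℕ)
      let D : Matrix ((j : Fin γ) × Fin (w j.succ)) ((j : Fin γ) × Fin (w j.succ)) F :=
        Matrix.of fun r c =>
          α c.1.succ ^ (r.1 : ℕ) * (α c.1.succ - α 0) * β c.1.succ c.2 ^ (r.2 : ℕ)
      have hsub : (E * H).submatrix e.symm e.symm = Matrix.fromBlocks A Bm 0 D := by
        ext r c
        rcases r with s | ⟨i, s⟩ <;> rcases c with t | ⟨j, t⟩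
        · simp only [Matrix.submatrix_apply, sigmaFinSuccEquiv_symm_inl,
            Matrix.fromBlocks_apply₁₁, e]
          rw [hG, dif_pos rfl]
          simp [hH, A]
        · simp only [Matrix.submatrix_apply, sigmaFinSuccEquiv_symm_inl,
            sigmaFinSuccEquiv_symm_inr, Matrix.fromBlocks_apply₁₂, e]
          rw [hG, dif_pos rfl]
          simp [hH, Bm]
        · simp only [Matrix.submatrix_apply, sigmaFinSuccEquiv_symm_inl,
            sigmaFinSuccEquiv_symm_inr, Matrix.fromBlocks_apply₂₁, e]
          rw [hG, dif_neg (Fin.succ_ne_zero i)]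
          simp [hH, pr, Fin.pred_succ, pow_succ]
          ring
        · simp only [Matrix.submatrix_apply, sigmaFinSuccEquiv_symm_inr,
            Matrix.fromBlocks_apply₂₂, e]
          rw [hG, dif_neg (Fin.succ_ne_zero i)]
          simp [hH, pr, Fin.pred_succ, pow_succ, D]
          ring
      have hdet2 : (E * H).det = A.det * D.det := by
        rw [← Matrix.det_submatrix_equiv_self e.symm, hsub, Matrix.det_fromBlocks_zero₂₁]
      let D₀ : Matrix ((j : Fin γ) × Fin (w j.succ)) ((j : Fin γ) × Fin (w j.succ)) F :=
        Matrix.of fun r c => α c.1.succ ^ (r.1 : ℕ) * β c.1.succ c.2 ^ (r.2 : ℕ)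
      have hD : D = D₀ * Matrix.diagonal
          (fun c : (j : Fin γ) × Fin (w j.succ) => α c.1.succ - α 0) := by
        ext r c
        rw [Matrix.mul_diagonal]
        simp only [D, D₀, Matrix.of_apply]
        ring
      have hdetD : D.det = D₀.det * ∏ j : Fin γ, (α j.succ - α 0) ^ (w j.succ) := by
        rw [hD, Matrix.det_mul, Matrix.det_diagonal]
        congr 1
        rw [← Finset.univ_sigma_univ, Finset.prod_sigma]
        simp
      have hIH := aux_det γ (fun j => w j.succ)
        (fun i j h => hw _ _ (Fin.succ_le_succ_iff.mpr h)) (fun j => α j.succ)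
        (fun j => β j.succ) D₀ (fun r c => rfl)
      rw [hdetH, hdet2, hdetD, hIH]
      rw [Fin.prod_univ_succ
          (fun i : Fin (γ+1) => (Matrix.of fun s t : Fin (w i) => β i t ^ (s : ℕ)).det),
        Fin.prod_univ_succ
          (fun j : Fin (γ+1) => (∏ i ∈ Finset.univ.filter (· < j), (α j - α i)) ^ (w j))]
      have h0 : (∏ i ∈ Finset.univ.filter (· < (0 : Fin (γ+1))), (α 0 - α i)) ^ (w 0) = 1 := by
        rw [Finset.filter_false_of_mem (fun i _ => Fin.not_lt_zero i), Finset.prod_empty, one_pow]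
      have hsplit : ∏ j : Fin γ,
          (∏ i ∈ Finset.univ.filter (· < (j.succ : Fin (γ+1))), (α j.succ - α i)) ^ (w j.succ)
          = (∏ j : Fin γ, (α j.succ - α 0) ^ (w j.succ)) *
            ∏ j : Fin γ,
              (∏ i ∈ Finset.univ.filter (· < j), (α j.succ - α i.succ)) ^ (w j.succ) := by
        rw [← Finset.prod_mul_distrib]
        apply Finset.prod_congr rfl
        intro j _
        rw [prod_filter_lt_succ (fun i => α j.succ - α i) j, mul_pow]
      rw [hsplit, h0]
      ring


open Finset in
/-- Block Vandermonde determinant: for the block matrix `H = [H_{ij}]` with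
`H_{ij} = α_j^{i-1} B_{ij}`, where `B_{ij}` is the `w_i × w_j` matrix with `(s,t)`-entry
`β_{j,t}^{s-1}`, the `α_j` pairwise distinct, each family `β_{j,•}` pairwise distinct and
`w₁ ≥ w₂ ≥ ⋯ ≥ w_γ ≥ 1`, one has
`det H = (∏ᵢ det B_{ii}) ⬝ ∏ⱼ ρⱼ^{wⱼ}` with `ρⱼ = ∏_{i<j} (αⱼ - αᵢ)`;
in particular `H` is invertible. -/
theorem block_vandermonde_det {F : Type*} [Field F] (γ : ℕ) (w : Fin γ → ℕ)
    (hw : ∀ i j : Fin γ, i ≤ j → w j ≤ w i) (hw1 : ∀ i, 1 ≤ w i)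
    (α : Fin γ → F) (hα : Function.Injective α)
    (β : (j : Fin γ) → Fin (w j) → F) (hβ : ∀ j, Function.Injective (β j))
    (H : Matrix ((j : Fin γ) × Fin (w j)) ((j : Fin γ) × Fin (w j)) F)
    (hH : ∀ r c : (j : Fin γ) × Fin (w j),
      H r c = α c.1 ^ (r.1 : ℕ) * β c.1 c.2 ^ (r.2 : ℕ)) :
    H.det =
      (∏ i : Fin γ, (Matrix.of fun s t : Fin (w i) => β i t ^ (s : ℕ)).det) *
        ∏ j : Fin γ, (∏ i ∈ Finset.univ.filter (· < j), (α j - α i)) ^ (w j) ∧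
      IsUnit H.det := by
  have h1 := aux_det γ w hw α β H hH
  refine ⟨h1, ?_⟩
  rw [isUnit_iff_ne_zero, h1]
  apply mul_ne_zero
  · rw [Finset.prod_ne_zero_iff]
    intro i _
    have hm : (Matrix.of fun s t : Fin (w i) => β i t ^ (s : ℕ))
        = (Matrix.vandermonde (β i)).transpose := by
      ext s t
      rfl
    rw [hm, Matrix.det_transpose]
    exact Matrix.det_vandermonde_ne_zero_iff.mpr (hβ i)
  · rw [Finset.prod_ne_zero_iff]
    intro j _
    apply pow_ne_zero
    rw [Finset.prod_ne_zero_iff]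
    intro i hi
    have hij : i < j := by simpa using hi
    exact sub_ne_zero.mpr fun he => absurd (hα he) (ne_of_gt hij)
end

section
/- Let A be a numerical semigroup with genus g = |ℕ∖A| and conductor c. Then for every x ∈ A with x ≥ c, the Feng–Rao distance satisfies δ_FR(x) ≥ x + 1 − 2g. -/
/-- Key lemma: for any `y ∈ A`, the divisor set of `y` has at least `y + 1 - 2g` elements. -/
theorem fengRao_key (A : Set ℕ) (hfin : (Aᶜ).Finite) (y : ℕ) :
    (y : ℤ) + 1 - 2 * (Set.ncard Aᶜ : ℤ) ≤
      (Set.ncard {a : ℕ | a ∈ A ∧ a ≤ y ∧ y - a ∈ A} : ℤ) := by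
  set D := {a : ℕ | a ∈ A ∧ a ≤ y ∧ y - a ∈ A} with hD
  set I := Set.Iic y with hI
  have hIfin : I.Finite := Set.finite_Iic y
  have hDI : D ⊆ I := fun a ha => ha.2.1
  have hsub : I \ D ⊆ (Aᶜ ∩ I) ∪ ((fun a => y - a) '' (Aᶜ ∩ I)) := by
    rintro a ⟨haI, haD⟩
    by_cases h1 : a ∈ A
    · right
      have h2 : y - a ∉ A := fun h => haD ⟨h1, haI, h⟩
      refine ⟨y - a, ⟨h2, Nat.sub_le _ _⟩, ?_⟩
      have : a ≤ y := haI
      simp only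
      omega
    · exact Or.inl ⟨h1, haI⟩
  have hfin1 : (Aᶜ ∩ I).Finite := hfin.inter_of_left _
  have h1 : (Aᶜ ∩ I).ncard ≤ Aᶜ.ncard :=
    Set.ncard_le_ncard Set.inter_subset_left hfin
  have h2 : ((fun a => y - a) '' (Aᶜ ∩ I)).ncard ≤ (Aᶜ ∩ I).ncard :=
    Set.ncard_image_le hfin1
  have h3 : (I \ D).ncard ≤ (Aᶜ ∩ I).ncard + ((fun a => y - a) '' (Aᶜ ∩ I)).ncard :=
    le_trans (Set.ncard_le_ncard hsub ((hfin1.union (hfin1.image _))))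
      (Set.ncard_union_le _ _)
  have h4 : (I \ D).ncard + D.ncard = I.ncard :=
    Set.ncard_diff_add_ncard_of_subset hDI hIfin
  have h5 : I.ncard = y + 1 := by
    rw [hI, ← Finset.coe_Iic, Set.ncard_coe_finset, Nat.card_Iic]
  have := Set.ncard_le_ncard hDI hIfin
  omega

/-- For a numerical semigroup `A` with genus `g = |ℕ \ A|` and conductor `c`, the Feng–Rao
distance `δ_FR(x) = min { |D(m)| : m ∈ A, m ≥ x }`, where `D(m) = {a ∈ A : m - a ∈ A}`,
satisfies `δ_FR(x) ≥ x + 1 - 2g` for every `x ∈ A` with `x ≥ c`. -/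
theorem fengRao_ge (A : Set ℕ) (h0 : 0 ∈ A) (hadd : ∀ a ∈ A, ∀ b ∈ A, a + b ∈ A)
    (hfin : (Aᶜ).Finite) (c : ℕ)
    (hc1 : ∀ u : ℕ, c + u ∈ A) (hc2 : c = 0 ∨ c - 1 ∉ A) :
    ∀ x ∈ A, c ≤ x →
      (x : ℤ) + 1 - 2 * (Set.ncard Aᶜ : ℤ) ≤
        ((sInf {k : ℕ | ∃ y ∈ A, x ≤ y ∧
          k = Set.ncard {a : ℕ | a ∈ A ∧ a ≤ y ∧ y - a ∈ A}} : ℕ) : ℤ) := by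
  intro x hx hcx
  have hne : {k : ℕ | ∃ y ∈ A, x ≤ y ∧
      k = Set.ncard {a : ℕ | a ∈ A ∧ a ≤ y ∧ y - a ∈ A}}.Nonempty :=
    ⟨_, x, hx, le_refl x, rfl⟩
  obtain ⟨y, hy, hxy, hk⟩ := Nat.sInf_mem hne
  rw [hk]
  have := fengRao_key A hfin y
  have : (x : ℤ) ≤ y := Int.ofNat_le.mpr hxy
  omega
end

section
/- With notation as in the elementary abelian p-extension F = K(x,y), y^q + μy = f(x), deg f = m, the dual of the one-point code C_r = C_L(D, rQ_∞) is the coordinatewise scaling by ā of C_{2qm−q−m−1−r}, where ā^{-1} = (f'(x)(P) : P ∈ supp D): that is, C_r^⊥ = ā ⋆ C_{2qm−q−m−1−r}. -/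
/-- The one-point geometric Goppa code `C_r = C_L(D, rQ∞)` on the elementary abelian
`p`-extension `y^q + μy = f(x)`, realized concretely: `L(rQ∞)` has basis
`{xⁱyʲ : 0 ≤ i, 0 ≤ j ≤ q-1, iq + jm ≤ r}`, evaluated at the `qm` rational places
`P_{αᵢ,βⱼ}` (identified with the points `(αᵢ, βⱼ)`). -/
def onePointCode {K : Type*} [Field K] (q m : ℕ) (α : Fin m → K) (β : Fin q → K)
    (r : ℕ) : Submodule K (Fin m × Fin q → K) :=
  Submodule.span K {w : Fin m × Fin q → K |
    ∃ i j : ℕ, j ≤ q - 1 ∧ i * q + j * m ≤ r ∧ w = fun P => α P.1 ^ i * β P.2 ^ j}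

open Polynomial Lagrange Finset in
private lemma lagrange_sum {K : Type*} [Field K] {n : ℕ} (hn : 1 ≤ n) (γ : Fin n → K)
    (hγ : Function.Injective γ) (k : ℕ) (hk : k ≤ n - 1) :
    ∑ u, ((derivative (nodal univ γ)).eval (γ u))⁻¹ * γ u ^ k
      = if k = n - 1 then 1 else 0 := by
  classical
  have hvs : Set.InjOn γ ↑(univ : Finset (Fin n)) := hγ.injOn
  have hcard : (univ : Finset (Fin n)).card = n := by simp
  have hdeg : ((X : K[X]) ^ k).degree < ((univ : Finset (Fin n)).card : ℕ) := by
    rw [degree_X_pow, hcard]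
    exact_mod_cast Nat.lt_of_le_of_lt hk (by omega)
  have hinterp := Lagrange.eq_interpolate hvs hdeg
  have hco := congrArg (fun g => Polynomial.coeff g (n - 1)) hinterp
  simp only [interpolate_apply, finset_sum_coeff, coeff_C_mul, coeff_X_pow] at hco
  have hbasis : ∀ i : Fin n, (Lagrange.basis univ γ i).coeff (n - 1) = nodalWeight univ γ i := by
    intro i
    rw [basis_eq_prod_sub_inv_mul_nodal_div (mem_univ i),
      ← nodal_erase_eq_nodal_div (mem_univ i), coeff_C_mul]
    have hdeg2 : (nodal ((univ : Finset (Fin n)).erase i) γ).natDegree = n - 1 := by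
      rw [natDegree_nodal, card_erase_of_mem (mem_univ i), hcard]
    rw [← hdeg2, Polynomial.Monic.coeff_natDegree nodal_monic, mul_one]
  simp only [hbasis, eval_pow, eval_X] at hco
  have h3 : ∑ u, ((derivative (nodal univ γ)).eval (γ u))⁻¹ * γ u ^ k
      = ∑ x : Fin n, γ x ^ k * nodalWeight univ γ x := by
    refine Finset.sum_congr rfl fun i _ => ?_
    rw [nodalWeight_eq_eval_derivative_nodal (mem_univ i), mul_comm]
  rw [h3, ← hco]
  by_cases h : k = n - 1 <;> simp [h] <;> omega

open Polynomial Lagrange Finset in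
private lemma nodal_beta {K : Type*} [Field K] {q : ℕ} (hq2 : 2 ≤ q)
    (μ : K) (β : Fin q → K) (hβ : Function.Injective β)
    (hroot : ∀ j, β j ^ q + μ * β j = 0) :
    nodal (univ : Finset (Fin q)) β = X ^ q + C μ * X := by
  classical
  have hcard : (univ : Finset (Fin q)).card = q := by simp
  have hdegCX : (C μ * X : K[X]).degree < (X ^ q : K[X]).degree := by
    rw [degree_X_pow]
    calc (C μ * X : K[X]).degree ≤ 1 := degree_C_mul_X_le μ
      _ < (q : WithBot ℕ) := by exact_mod_cast by omega
  have hmonic : (X ^ q + C μ * X : K[X]).Monic := by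
    have := monic_X_pow (R := K) q
    exact this.add_of_left hdegCX
  refine eq_of_degree_le_of_eval_index_eq (v := β) univ hβ.injOn ?_ ?_ ?_ ?_
  · rw [degree_nodal, hcard]
  · rw [degree_nodal, hcard, degree_add_eq_left_of_degree_lt hdegCX, degree_X_pow]
  · rw [nodal_monic, hmonic]
  · intro i _
    rw [eval_nodal_at_node (mem_univ i)]
    simp only [eval_add, eval_mul, eval_pow, eval_X, eval_C]
    exact (hroot i).symm

open Polynomial Lagrange Finset in
private lemma deriv_nodal_beta {K : Type*} [Field K] {q : ℕ} (hq2 : 2 ≤ q) (hqK : (q : K) = 0)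
    (μ : K) (β : Fin q → K) (hβ : Function.Injective β)
    (hroot : ∀ j, β j ^ q + μ * β j = 0) :
    derivative (nodal (univ : Finset (Fin q)) β) = C μ := by
  rw [nodal_beta hq2 μ β hβ hroot, derivative_add, derivative_X_pow, derivative_C_mul,
    derivative_X, hqK]
  simp

open Polynomial in
/-- Duality for the one-point codes `C_r` on `y^q + μy = f(x)`:
`C_r^⊥ = ā ⋆ C_{2qm-q-m-1-r}` where `ā⁻¹ = (f'(x)(P))_{P ∈ supp D}`, i.e. the Euclidean
dual of `C_r` consists exactly of the coordinatewise rescalings by `(f'(α))⁻¹` of the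
words of `C_{2qm-q-m-1-r}`. -/
theorem onePointCode_dual {K : Type*} [Field K] [Fintype K]
    (p t : ℕ) (hp : p.Prime) [CharP K p] (q : ℕ) (hq : q = p ^ t) (ht : 1 ≤ t)
    (m : ℕ) (hm : 2 ≤ m) (hmp : ¬ p ∣ m) (μ : K) (hμ : μ ≠ 0)
    (α : Fin m → K) (hα : Function.Injective α)
    (β : Fin q → K) (hβ : Function.Injective β) (hroot : ∀ j, β j ^ q + μ * β j = 0)
    (f : K[X]) (hf : f = ∏ u, (X - C (α u)))
    (r : ℕ) (hr : r ≤ 2 * q * m - q - m - 1) :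
    {v : Fin m × Fin q → K | ∀ u ∈ onePointCode q m α β r, ∑ P, v P * u P = 0} =
      {v : Fin m × Fin q → K | ∃ c ∈ onePointCode q m α β (2 * q * m - q - m - 1 - r),
        v = fun P => ((derivative f).eval (α P.1))⁻¹ * c P} := by
  classical
  have hq2 : 2 ≤ q := by
    rw [hq]
    calc 2 ≤ p := hp.two_le
      _ = p ^ 1 := (pow_one p).symm
      _ ≤ p ^ t := Nat.pow_le_pow_right hp.pos ht
  have hqK : (q : K) = 0 := by
    rw [hq, Nat.cast_pow, CharP.cast_eq_zero K p, zero_pow (by omega : t ≠ 0)]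
  set r' := 2 * q * m - q - m - 1 - r with hr'def
  -- basic product arithmetic
  have hmul1 : q * 2 ≤ q * m := Nat.mul_le_mul_left q hm
  have hmul2 : m * 2 ≤ m * q := Nat.mul_le_mul_left m hq2
  have hmulc : q * m = m * q := mul_comm q m
  have hassoc : 2 * q * m = 2 * (q * m) := by ring
  have hsum : r + r' + (q + m + 1) = 2 * q * m := by omega
  -- f is the nodal polynomial of α
  have hfnodal : f = Lagrange.nodal Finset.univ α := by rw [Lagrange.nodal_eq]; exact hf
  have hfd : ∀ u : Fin m, (derivative f).eval (α u) ≠ 0 := by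
    intro u
    rw [hfnodal, Lagrange.eval_nodal_derivative_eval_node_eq (Finset.mem_univ u),
      Lagrange.eval_nodal]
    refine Finset.prod_ne_zero_iff.mpr fun w hw => ?_
    exact sub_ne_zero.mpr (hα.ne (Finset.ne_of_mem_erase hw).symm)
  -- power sums
  set Sa : ℕ → K := fun k => ∑ u : Fin m, ((derivative f).eval (α u))⁻¹ * α u ^ k with hSadef
  set Sb : ℕ → K := fun k => ∑ v : Fin q, β v ^ k with hSbdef
  have hSaval : ∀ k ≤ m - 1, Sa k = if k = m - 1 then 1 else 0 := by
    intro k hk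
    rw [hSadef]
    simp only [hfnodal]
    exact lagrange_sum (by omega) α hα k hk
  have hSa0 : ∀ k ≤ m - 2, Sa k = 0 := by
    intro k hk
    rw [hSaval k (by omega), if_neg (by omega)]
  have hSam : Sa (m - 1) = 1 := by rw [hSaval (m - 1) le_rfl, if_pos rfl]
  have hSbval : ∀ k ≤ q - 1, Sb k = if k = q - 1 then μ else 0 := by
    intro k hk
    have hlag := lagrange_sum (by omega : 1 ≤ q) β hβ k hk
    simp only [deriv_nodal_beta hq2 hqK μ β hβ hroot, eval_C, ← Finset.mul_sum] at hlag
    have hSbk : Sb k = ∑ v : Fin q, β v ^ k := by rw [hSbdef]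
    rw [hSbk]
    by_cases h : k = q - 1
    · rw [if_pos h]; rw [if_pos h] at hlag
      have h2 := congrArg (fun z => μ * z) hlag
      simp only [← mul_assoc, mul_inv_cancel₀ hμ, one_mul, mul_one] at h2
      exact h2
    · rw [if_neg h]; rw [if_neg h] at hlag
      exact (mul_eq_zero.mp hlag).resolve_left (inv_ne_zero hμ)
  have hSbq : Sb (q - 1) = μ := by rw [hSbval (q - 1) le_rfl, if_pos rfl]
  have hSbhigh : ∀ k, q ≤ k → Sb k = -(μ * Sb (k - q + 1)) := by
    intro k hk
    rw [hSbdef]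
    simp only []
    have : ∀ v : Fin q, β v ^ k = -(μ * β v ^ (k - q + 1)) := by
      intro v
      have h1 : β v ^ q = -(μ * β v) := eq_neg_of_add_eq_zero_left (hroot v)
      calc β v ^ k = β v ^ (k - q) * β v ^ q := by rw [← pow_add]; congr 1; omega
        _ = β v ^ (k - q) * -(μ * β v) := by rw [h1]
        _ = -(μ * (β v ^ (k - q) * β v)) := by ring
        _ = -(μ * β v ^ (k - q + 1)) := by rw [← pow_succ]
    simp only [this, Finset.sum_neg_distrib, Finset.mul_sum]
  have hSbz : ∀ k, k ≤ 2 * q - 2 → k ≠ q - 1 → k ≠ 2 * q - 2 → Sb k = 0 := by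
    intro k hk h1 h2
    rcases (by omega : k ≤ q - 2 ∨ (q ≤ k ∧ k ≤ 2 * q - 3)) with h | ⟨h3, h4⟩
    · rw [hSbval k (by omega), if_neg (by omega)]
    · rw [hSbhigh k h3, hSbval (k - q + 1) (by omega), if_neg (by omega), mul_zero, neg_zero]
  -- the pairing factorization
  have pairSum : ∀ a b i j : ℕ,
      ∑ P : Fin m × Fin q, (((derivative f).eval (α P.1))⁻¹ * (α P.1 ^ a * β P.2 ^ b)) *
        (α P.1 ^ i * β P.2 ^ j) = Sa (a + i) * Sb (b + j) := by
    intro a b i j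
    rw [Fintype.sum_prod_type]
    have h1 : ∀ x : Fin m, ∑ y : Fin q,
        (((derivative f).eval (α x))⁻¹ * (α x ^ a * β y ^ b)) * (α x ^ i * β y ^ j)
        = (((derivative f).eval (α x))⁻¹ * α x ^ (a + i)) * ∑ y : Fin q, β y ^ (b + j) := by
      intro x
      rw [Finset.mul_sum]
      refine Finset.sum_congr rfl fun y _ => ?_
      rw [pow_add, pow_add]; ring
    simp only [h1]
    rw [← Finset.sum_mul, hSadef, hSbdef]
  -- orthogonality of generators
  have horth : ∀ a b i j : ℕ, b ≤ q - 1 → j ≤ q - 1 → a * q + b * m ≤ r' →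
      i * q + j * m ≤ r → Sa (a + i) * Sb (b + j) = 0 := by
    intro a b i j hb hj ha' hi'
    have hk2 : b + j ≤ 2 * q - 2 := by omega
    by_cases h1 : b + j = q - 1 ∨ b + j = 2 * q - 2
    · have hSQ : (a + i) * q + (b + j) * m + (q + m + 1) ≤ 2 * q * m := by
        have e1 : (a + i) * q = a * q + i * q := by ring
        have e2 : (b + j) * m = b * m + j * m := by ring
        omega
      have hs : a + i + 2 ≤ m := by
        rcases h1 with h | h
        · have e1 : (b + j) * m = q * m - m := by rw [h, Nat.sub_one_mul]
          have e3 : m ≤ q * m := Nat.le_mul_of_pos_left m (by omega)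
          -- so (a+i)*q + q + 1 ≤ q*m
          have e4 : (a + i) * q + q + 1 ≤ q * m := by omega
          by_contra hcon
          have e5 : q * m ≤ q * (a + i + 1) := Nat.mul_le_mul_left q (by omega)
          have e6 : q * (a + i + 1) = (a + i) * q + q := by ring
          omega
        · have e1 : (b + j) * m = 2 * (q * m) - 2 * m := by
            rw [h, Nat.sub_mul]; ring_nf
          have e3 : m ≤ q * m := Nat.le_mul_of_pos_left m (by omega)
          have e7 : a + i ≤ (a + i) * q := Nat.le_mul_of_pos_right (a + i) (by omega)
          omega
      rw [hSa0 (a + i) (by omega), zero_mul]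
    · push_neg at h1
      rw [hSbz (b + j) hk2 h1.1 h1.2, mul_zero]
  -- the two directions
  ext v
  simp only [Set.mem_setOf_eq]
  constructor
  · -- hard direction
    intro hv
    -- the Kronecker/Vandermonde matrix
    set A : Matrix (Fin m × Fin q) (Fin m × Fin q) K :=
      Matrix.kroneckerMap (· * ·) (Matrix.vandermonde α) (Matrix.vandermonde β) with hAdef
    have hA : ∀ (P ij : Fin m × Fin q), A P ij = α P.1 ^ (ij.1 : ℕ) * β P.2 ^ (ij.2 : ℕ) :=
      fun P ij => rfl
    have hAdet : IsUnit A.det := by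
      rw [hAdef, Matrix.det_kronecker]
      refine (isUnit_iff_ne_zero).mpr (mul_ne_zero (pow_ne_zero _ ?_) (pow_ne_zero _ ?_))
      · exact Matrix.det_vandermonde_ne_zero_iff.mpr hα
      · exact Matrix.det_vandermonde_ne_zero_iff.mpr hβ
    obtain ⟨c, hAc⟩ : ∃ c : Fin m × Fin q → K, ∀ P : Fin m × Fin q,
        (derivative f).eval (α P.1) * v P = ∑ ij : Fin m × Fin q, A P ij * c ij := by
      refine ⟨A⁻¹.mulVec (fun P => (derivative f).eval (α P.1) * v P), fun P => ?_⟩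
      have h1 : A.mulVec (A⁻¹.mulVec (fun P => (derivative f).eval (α P.1) * v P))
          = fun P => (derivative f).eval (α P.1) * v P := by
        rw [Matrix.mulVec_mulVec, Matrix.mul_nonsing_inv _ hAdet, Matrix.one_mulVec]
      have h2 : A.mulVec (A⁻¹.mulVec (fun P => (derivative f).eval (α P.1) * v P)) P
          = ∑ ij : Fin m × Fin q, A P ij *
              (A⁻¹.mulVec (fun P => (derivative f).eval (α P.1) * v P)) ij := by
        simp [Matrix.mulVec, dotProduct]
      rw [← h2, h1]
    have hvP : ∀ P : Fin m × Fin q,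
        v P = ((derivative f).eval (α P.1))⁻¹ * ∑ ij : Fin m × Fin q, A P ij * c ij := by
      intro P
      rw [← hAc P, ← mul_assoc, inv_mul_cancel₀ (hfd P.1), one_mul]
    -- key linear equations
    have heq : ∀ i' j' : ℕ, j' ≤ q - 1 → i' * q + j' * m ≤ r →
        ∑ ab : Fin m × Fin q, c ab * (Sa ((ab.1 : ℕ) + i') * Sb ((ab.2 : ℕ) + j')) = 0 := by
      intro i' j' hj' hle
      have h0 := hv _ (Submodule.subset_span ⟨i', j', hj', hle, rfl⟩)
      have h2 : ∀ P : Fin m × Fin q, v P * (α P.1 ^ i' * β P.2 ^ j')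
          = ∑ ab : Fin m × Fin q, c ab *
            ((((derivative f).eval (α P.1))⁻¹ * (α P.1 ^ (ab.1 : ℕ) * β P.2 ^ (ab.2 : ℕ))) *
              (α P.1 ^ i' * β P.2 ^ j')) := by
        intro P
        rw [hvP P]
        simp only [hA]
        rw [Finset.mul_sum, Finset.sum_mul]
        refine Finset.sum_congr rfl fun ab _ => ?_
        ring
      rw [Finset.sum_congr rfl (fun P _ => h2 P), Finset.sum_comm] at h0
      rw [← h0]
      refine Finset.sum_congr rfl fun ab _ => ?_
      rw [← Finset.mul_sum, pairSum]
    -- vanishing of the bad coefficients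
    have key : ∀ n : ℕ, ∀ ij : Fin m × Fin q,
        (q - 1 - (ij.2 : ℕ)) * m + (m - 1 - (ij.1 : ℕ)) ≤ n →
        r' < (ij.1 : ℕ) * q + (ij.2 : ℕ) * m → c ij = 0 := by
      intro n
      induction n using Nat.strong_induction_on with
      | _ n IH =>
      rintro ⟨i, j⟩ hmeas hbad
      dsimp only at hmeas hbad
      have hi1 : (i : ℕ) < m := i.isLt
      have hj1 : (j : ℕ) < q := j.isLt
      have hle : (m - 1 - (i : ℕ)) * q + (q - 1 - (j : ℕ)) * m ≤ r := by
        have e1 : (m - 1 - (i : ℕ)) * q + (i : ℕ) * q = (m - 1) * q := by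
          rw [← Nat.add_mul]; congr 1; omega
        have e2 : (q - 1 - (j : ℕ)) * m + (j : ℕ) * m = (q - 1) * m := by
          rw [← Nat.add_mul]; congr 1; omega
        have e3 : (m - 1) * q = m * q - q := Nat.sub_one_mul m q
        have e4 : (q - 1) * m = q * m - m := Nat.sub_one_mul q m
        have e5 : q ≤ m * q := Nat.le_mul_of_pos_left q (by omega)
        have e6 : m ≤ q * m := Nat.le_mul_of_pos_left m (by omega)
        omega
      have h0 := heq (m - 1 - (i : ℕ)) (q - 1 - (j : ℕ)) (by omega) hle
      rw [Finset.sum_eq_single_of_mem (⟨i, j⟩ : Fin m × Fin q) (Finset.mem_univ _) ?other] at h0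
      · dsimp only at h0
        have e1 : (i : ℕ) + (m - 1 - (i : ℕ)) = m - 1 := by omega
        have e2 : (j : ℕ) + (q - 1 - (j : ℕ)) = q - 1 := by omega
        rw [e1, e2, hSam, hSbq, one_mul] at h0
        exact (mul_eq_zero.mp h0).resolve_right hμ
      case other =>
        rintro ⟨a, b⟩ - hne
        dsimp only
        have ha1 : (a : ℕ) < m := a.isLt
        have hb1 : (b : ℕ) < q := b.isLt
        by_cases hb : (b : ℕ) = (j : ℕ)
        · have ha : (a : ℕ) ≠ (i : ℕ) := by
            intro h
            exact hne (Prod.ext (Fin.ext h) (Fin.ext hb))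
          rcases lt_or_gt_of_ne ha with hlt | hgt
          · rw [hSa0 ((a : ℕ) + (m - 1 - (i : ℕ))) (by omega), zero_mul, mul_zero]
          · have hcab : c (a, b) = 0 := by
              refine IH ((q - 1 - (b : ℕ)) * m + (m - 1 - (a : ℕ))) ?_ (a, b) le_rfl ?_
              · have : (q - 1 - (b : ℕ)) * m = (q - 1 - (j : ℕ)) * m := by rw [hb]
                omega
              · dsimp only
                have e1 : ((i : ℕ) + 1) * q ≤ (a : ℕ) * q :=
                  Nat.mul_le_mul_right q (by omega)
                have e2 : ((i : ℕ) + 1) * q = (i : ℕ) * q + q := by ring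
                have e3 : (b : ℕ) * m = (j : ℕ) * m := by rw [hb]
                omega
            rw [hcab, zero_mul]
        · have hk2 : (b : ℕ) + (q - 1 - (j : ℕ)) ≤ 2 * q - 2 := by omega
          by_cases hcase : (b : ℕ) + (q - 1 - (j : ℕ)) = 2 * q - 2
          · have hbq : (b : ℕ) = q - 1 := by omega
            have hj0 : (j : ℕ) = 0 := by omega
            rcases Nat.lt_or_ge (a : ℕ) (i : ℕ) with hlt | hge
            · rw [hSa0 ((a : ℕ) + (m - 1 - (i : ℕ))) (by omega), zero_mul, mul_zero]
            · have hcab : c (a, b) = 0 := by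
                refine IH ((q - 1 - (b : ℕ)) * m + (m - 1 - (a : ℕ))) ?_ (a, b) le_rfl ?_
                · have e1 : (q - 1 - (b : ℕ)) * m = 0 := by
                    have : q - 1 - (b : ℕ) = 0 := by omega
                    rw [this, Nat.zero_mul]
                  have e2 : (q - 1 - (j : ℕ)) * m = (q - 1) * m := by
                    rw [hj0, Nat.sub_zero]
                  have e3 : m ≤ (q - 1) * m := Nat.le_mul_of_pos_left m (by omega)
                  omega
                · dsimp only
                  have e1 : (i : ℕ) * q ≤ (a : ℕ) * q := Nat.mul_le_mul_right q hge
                  have e2 : (j : ℕ) * m = 0 := by rw [hj0, Nat.zero_mul]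
                  omega
              rw [hcab, zero_mul]
          · have hne' : (b : ℕ) + (q - 1 - (j : ℕ)) ≠ q - 1 := by omega
            rw [hSbz ((b : ℕ) + (q - 1 - (j : ℕ))) hk2 hne' hcase, mul_zero, mul_zero]
    have hc0 : ∀ ij : Fin m × Fin q, r' < (ij.1 : ℕ) * q + (ij.2 : ℕ) * m → c ij = 0 :=
      fun ij h => key _ ij le_rfl h
    refine ⟨fun P => ∑ ij : Fin m × Fin q, A P ij * c ij, ?_, ?_⟩
    · have hrw : (fun P : Fin m × Fin q => ∑ ij : Fin m × Fin q, A P ij * c ij)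
          = ∑ ij : Fin m × Fin q, c ij •
            (fun P : Fin m × Fin q => α P.1 ^ (ij.1 : ℕ) * β P.2 ^ (ij.2 : ℕ)) := by
        funext P
        rw [Finset.sum_apply]
        refine Finset.sum_congr rfl fun ij _ => ?_
        rw [hA]
        simp only [Pi.smul_apply, smul_eq_mul]
        ring
      rw [hrw]
      refine Submodule.sum_mem _ fun ij _ => ?_
      by_cases hbad : r' < (ij.1 : ℕ) * q + (ij.2 : ℕ) * m
      · rw [hc0 ij hbad, zero_smul]
        exact Submodule.zero_mem _
      · exact Submodule.smul_mem _ _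
          (Submodule.subset_span ⟨ij.1, ij.2, by omega, by omega, rfl⟩)
    · funext P
      show v P = ((derivative f).eval (α P.1))⁻¹ * ∑ ij : Fin m × Fin q, A P ij * c ij
      exact hvP P
  · -- easy direction
    rintro ⟨c, hc, rfl⟩ u hu
    have main : ∀ u₀ ∈ onePointCode q m α β r, ∀ c' ∈ onePointCode q m α β r',
        ∑ P : Fin m × Fin q, (((derivative f).eval (α P.1))⁻¹ * c' P) * u₀ P = 0 := by
      intro u₀ hu₀
      induction hu₀ using Submodule.span_induction with
      | mem x hx =>
        intro c' hc'
        induction hc' using Submodule.span_induction with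
        | mem y hy =>
          obtain ⟨i, j, hj, hij, rfl⟩ := hx
          obtain ⟨a, b, hb, hab, rfl⟩ := hy
          rw [pairSum]
          exact horth a b i j hb hj hab hij
        | zero => simp
        | add y z hy hz ihy ihz =>
          have hterm : ∀ P : Fin m × Fin q,
              (((derivative f).eval (α P.1))⁻¹ * (y + z) P) * x P
              = (((derivative f).eval (α P.1))⁻¹ * y P) * x P
                + (((derivative f).eval (α P.1))⁻¹ * z P) * x P := by
            intro P; simp only [Pi.add_apply]; ring
          simp only [hterm, Finset.sum_add_distrib, ihy, ihz, add_zero]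
        | smul s y hy ihy =>
          have hterm : ∀ P : Fin m × Fin q,
              (((derivative f).eval (α P.1))⁻¹ * (s • y) P) * x P
              = s * ((((derivative f).eval (α P.1))⁻¹ * y P) * x P) := by
            intro P; simp only [Pi.smul_apply, smul_eq_mul]; ring
          simp only [hterm, ← Finset.mul_sum, ihy, mul_zero]
      | zero => intro c' hc'; simp
      | add y z hy hz ihy ihz =>
        intro c' hc'
        have hterm : ∀ P : Fin m × Fin q,
            (((derivative f).eval (α P.1))⁻¹ * c' P) * (y + z) P
            = (((derivative f).eval (α P.1))⁻¹ * c' P) * y P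
              + (((derivative f).eval (α P.1))⁻¹ * c' P) * z P := by
          intro P; simp only [Pi.add_apply]; ring
        simp only [hterm, Finset.sum_add_distrib, ihy c' hc', ihz c' hc', add_zero]
      | smul s y hy ihy =>
        intro c' hc'
        have hterm : ∀ P : Fin m × Fin q,
            (((derivative f).eval (α P.1))⁻¹ * c' P) * (s • y) P
            = s * ((((derivative f).eval (α P.1))⁻¹ * c' P) * y P) := by
          intro P; simp only [Pi.smul_apply, smul_eq_mul]; ring
        simp only [hterm, ← Finset.mul_sum, ihy c' hc', mul_zero]
    exact main u hu c hc
end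

section
/- With C_r the one-point code of length qm from the elementary abelian p-extension y^q + μy = f(x): if 0 ≤ r < qm then dim C_r = |H(r)| where H(r) = {u ∈ ⟨q,m⟩ : u ≤ r}; if qm ≤ r ≤ 2qm−q−m−1 then dim C_r = qm − |H(2qm−q−m−1−r)|; and if qm−q−m−1 < r < qm then dim C_r = r + 1 − (q−1)(m−1)/2. -/
namespace OnePointAux

open Matrix Finset Submodule
open scoped Kronecker

/-! ### Numerical lemmas about the semigroup `⟨q, m⟩` -/

lemma rep_inj {q m : ℕ} (hco : Nat.Coprime q m) (hq : 0 < q) {i i' j j' : ℕ}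
    (hj : j < q) (hj' : j' < q) (h : i * q + j * m = i' * q + j' * m) :
    i = i' ∧ j = j' := by
  have e1 : (j * m + i * q) % q = (j * m) % q := Nat.add_mul_mod_self_right _ _ _
  have e2 : (j' * m + i' * q) % q = (j' * m) % q := Nat.add_mul_mod_self_right _ _ _
  have h' : j * m + i * q = j' * m + i' * q := by omega
  have hmod : j * m ≡ j' * m [MOD q] := by unfold Nat.ModEq; rw [← e1, ← e2, h']
  have hjj : j ≡ j' [MOD q] := Nat.ModEq.cancel_right_of_coprime hco hmod
  have hjeq : j = j' := by
    have h2 := hjj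
    unfold Nat.ModEq at h2
    rwa [Nat.mod_eq_of_lt hj, Nat.mod_eq_of_lt hj'] at h2
  subst hjeq
  refine ⟨Nat.eq_of_mul_eq_mul_right hq ?_, rfl⟩
  omega

lemma rep_reduce {q m : ℕ} (hq : 0 < q) {u i j : ℕ} (h : u = i * q + j * m) :
    ∃ i' j', j' < q ∧ u = i' * q + j' * m :=
  ⟨i + m * (j / q), j % q, Nat.mod_lt _ hq, by
    subst h
    calc i * q + j * m = i * q + (q * (j / q) + j % q) * m := by rw [Nat.div_add_mod]
    _ = (i + m * (j / q)) * q + j % q * m := by ring⟩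

lemma not_both {q m : ℕ} (h2q : 2 ≤ q) (h2m : 2 ≤ m) (hco : Nat.Coprime q m)
    (hqm : q + m ≤ q * m) {u v : ℕ} (huv : u + v = q * m - q - m)
    (hu : ∃ i j : ℕ, u = i * q + j * m) (hv : ∃ i j : ℕ, v = i * q + j * m) : False := by
  obtain ⟨i, j, rfl⟩ := hu
  obtain ⟨i', j', rfl⟩ := hv
  have h1 : (i + i' + 1) * q + (j + j' + 1) * m
      = (i * q + j * m) + (i' * q + j' * m) + q + m := by ring
  have hsum : (i + i' + 1) * q + (j + j' + 1) * m = q * m := by omega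
  have hdq : q ∣ (j + j' + 1) * m := by
    have h2 : q ∣ (i + i' + 1) * q + (j + j' + 1) * m := hsum ▸ dvd_mul_right q m
    exact (Nat.dvd_add_right (dvd_mul_left q _)).mp h2
  have hdm : m ∣ (i + i' + 1) * q := by
    have h2 : m ∣ (i + i' + 1) * q + (j + j' + 1) * m := hsum ▸ dvd_mul_left m q
    exact (Nat.dvd_add_left (dvd_mul_left m _)).mp h2
  have hq_le : q ≤ j + j' + 1 := Nat.le_of_dvd (by omega) (hco.dvd_of_dvd_mul_right hdq)
  have hm_le : m ≤ i + i' + 1 := Nat.le_of_dvd (by omega) (hco.symm.dvd_of_dvd_mul_right hdm)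
  have g1 : m * q ≤ (i + i' + 1) * q := Nat.mul_le_mul_right _ hm_le
  have g2 : q * m ≤ (j + j' + 1) * m := Nat.mul_le_mul_right _ hq_le
  have g3 : m * q = q * m := mul_comm m q
  omega

lemma nongap {q m : ℕ} (h2q : 2 ≤ q) (h2m : 2 ≤ m) (hco : Nat.Coprime q m)
    (hqm : q + m ≤ q * m) {u : ℕ} (hu : ¬ ∃ i j : ℕ, u = i * q + j * m) :
    u ≤ q * m - q - m ∧ ∃ i j : ℕ, q * m - q - m - u = i * q + j * m := by
  haveI : NeZero q := ⟨by omega⟩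
  have hmq : Nat.Coprime m q := hco.symm
  set w : (ZMod q)ˣ := ZMod.unitOfCoprime m hmq with hw
  set j : ℕ := ((w⁻¹ : (ZMod q)ˣ) * (u : ZMod q) : ZMod q).val with hjdef
  have hjq : j < q := ZMod.val_lt _
  have hj0 : ((j : ℕ) : ZMod q) = ((w⁻¹ : (ZMod q)ˣ) : ZMod q) * (u : ZMod q) :=
    ZMod.natCast_rightInverse _
  have hcast : ((j * m : ℕ) : ZMod q) = (u : ZMod q) := by
    push_cast
    rw [hj0, show ((m : ZMod q)) = ((w : (ZMod q)ˣ) : ZMod q) from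
      (ZMod.coe_unitOfCoprime m hmq).symm]
    calc ((w⁻¹ : (ZMod q)ˣ) : ZMod q) * (u : ZMod q) * ((w : (ZMod q)ˣ) : ZMod q)
        = (u : ZMod q) * (((w⁻¹ : (ZMod q)ˣ) : ZMod q) * ((w : (ZMod q)ˣ) : ZMod q)) := by ring
    _ = (u : ZMod q) := by rw [Units.inv_mul]; exact mul_one _
  have hmodeq : j * m ≡ u [MOD q] := (ZMod.natCast_eq_natCast_iff _ _ _).mp hcast
  by_cases hle : j * m ≤ u
  · exfalso
    obtain ⟨k, hk⟩ := (Nat.modEq_iff_dvd' hle).mp hmodeq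
    refine hu ⟨k, j, ?_⟩
    have h3 : u = q * k + j * m := by omega
    rw [h3, mul_comm q k]
  · push_neg at hle
    obtain ⟨k, hk⟩ := (Nat.modEq_iff_dvd' hle.le).mp hmodeq.symm
    have hk1 : 0 < k := by
      rcases Nat.eq_zero_or_pos k with h0 | h
      · rw [h0, mul_zero] at hk; omega
      · exact h
    have hjm_le : j * m ≤ (q - 1) * m := Nat.mul_le_mul_right _ (by omega)
    have hq1m : (q - 1) * m + m = q * m := by
      calc (q - 1) * m + m = ((q - 1) + 1) * m := by ring
      _ = q * m := by rw [Nat.sub_add_cancel (by omega)]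
    have hqk : q ≤ q * k := Nat.le_mul_of_pos_right q hk1
    constructor
    · omega
    · refine ⟨k - 1, q - 1 - j, ?_⟩
      have e1 : (k - 1) * q = q * k - q := by
        rw [Nat.sub_mul, one_mul, mul_comm]
      have e2 : (q - 1 - j) * m = (q - 1) * m - j * m := Nat.sub_mul _ _ _
      omega

lemma qm_le {q m : ℕ} (h2q : 2 ≤ q) (h2m : 2 ≤ m) : q + m ≤ q * m := by
  obtain ⟨a, rfl⟩ : ∃ a, q = a + 2 := ⟨q - 2, by omega⟩
  obtain ⟨b, rfl⟩ : ∃ b, m = b + 2 := ⟨m - 2, by omega⟩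
  have h1 : (a + 2) * (b + 2) = a * b + 2 * a + 2 * b + 4 := by ring
  omega

lemma Fsucc {q m : ℕ} (h2q : 2 ≤ q) (h2m : 2 ≤ m) :
    q * m - q - m + 1 = (q - 1) * (m - 1) := by
  obtain ⟨a, rfl⟩ : ∃ a, q = a + 2 := ⟨q - 2, by omega⟩
  obtain ⟨b, rfl⟩ : ∃ b, m = b + 2 := ⟨m - 2, by omega⟩
  have h1 : (a + 2) * (b + 2) = a * b + 2 * a + 2 * b + 4 := by ring
  have h2 : (a + 2 - 1) * (b + 2 - 1) = a * b + a + b + 1 := by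
    rw [show a + 2 - 1 = a + 1 from rfl, show b + 2 - 1 = b + 1 from rfl]; ring
  omega


open Classical in
lemma gaps_card {q m : ℕ} (h2q : 2 ≤ q) (h2m : 2 ≤ m) (hco : Nat.Coprime q m) :
    ((Finset.range (q * m - q - m + 1)).filter fun u => ¬ ∃ i j : ℕ, u = i * q + j * m).card
      = (q - 1) * (m - 1) / 2 := by
  classical
  have hqm := qm_le h2q h2m
  have hbij : ((Finset.range (q * m - q - m + 1)).filter
        fun u => ¬ ∃ i j : ℕ, u = i * q + j * m).card
      = ((Finset.range (q * m - q - m + 1)).filter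
        fun u => ∃ i j : ℕ, u = i * q + j * m).card := by
    apply Finset.card_nbij' (fun u => q * m - q - m - u) (fun u => q * m - q - m - u)
    · intro a ha
      simp only [Finset.mem_coe, Finset.mem_filter, Finset.mem_range] at ha ⊢
      obtain ⟨h1, h2⟩ := ha
      obtain ⟨hle, hrep⟩ := nongap h2q h2m hco hqm h2
      exact ⟨by omega, hrep⟩
    · intro a ha
      simp only [Finset.mem_coe, Finset.mem_filter, Finset.mem_range] at ha ⊢
      refine ⟨by omega, fun hrep => ?_⟩
      exact not_both h2q h2m hco hqm
        (show a + (q * m - q - m - a) = q * m - q - m by omega) ha.2 hrep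
    · intro a ha
      simp only [Finset.mem_coe, Finset.mem_filter, Finset.mem_range] at ha ⊢
      obtain ⟨h1, h2⟩ := ha
      have := (nongap h2q h2m hco hqm h2).1
      omega
    · intro a ha
      simp only [Finset.mem_coe, Finset.mem_filter, Finset.mem_range] at ha ⊢
      omega
  have hpart := Finset.card_filter_add_card_filter_not
      (s := Finset.range (q * m - q - m + 1)) (fun u => ∃ i j : ℕ, u = i * q + j * m)
  rw [Finset.card_range] at hpart
  have hFs := Fsucc h2q h2m
  omega

/-! ### Linear algebra -/

variable {K : Type*} [Field K]

lemma vandermonde_t_li {n : ℕ} (v : Fin n → K) (hv : Function.Injective v) :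
    LinearIndependent K (fun (i : Fin n) (x : Fin n) => v x ^ (i : ℕ)) := by
  have h : (fun (i : Fin n) (x : Fin n) => v x ^ (i : ℕ))
      = fun i => (Matrix.vandermonde v)ᵀ i := rfl
  rw [h, show (fun i => (Matrix.vandermonde v)ᵀ i) = (Matrix.vandermonde v)ᵀ.row from rfl,
    Matrix.linearIndependent_rows_iff_isUnit, Matrix.isUnit_iff_isUnit_det,
    Matrix.det_transpose]
  exact (Matrix.det_vandermonde_ne_zero_iff.mpr hv).isUnit

lemma bvec_li {q m : ℕ} (α : Fin m → K) (hα : Function.Injective α)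
    (β : Fin q → K) (hβ : Function.Injective β) :
    LinearIndependent K (fun (p : Fin m × Fin q) (P : Fin m × Fin q) =>
      α P.1 ^ (p.1 : ℕ) * β P.2 ^ (p.2 : ℕ)) := by
  have heq : (fun (p : Fin m × Fin q) (P : Fin m × Fin q) =>
      α P.1 ^ (p.1 : ℕ) * β P.2 ^ (p.2 : ℕ))
      = fun p => ((Matrix.vandermonde α)ᵀ ⊗ₖ (Matrix.vandermonde β)ᵀ) p := by
    funext pr P
    simp [Matrix.kroneckerMap_apply, Matrix.vandermonde]
  rw [heq, show (fun p => ((Matrix.vandermonde α)ᵀ ⊗ₖ (Matrix.vandermonde β)ᵀ) p)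
      = ((Matrix.vandermonde α)ᵀ ⊗ₖ (Matrix.vandermonde β)ᵀ).row from rfl,
    Matrix.linearIndependent_rows_iff_isUnit, Matrix.isUnit_iff_isUnit_det,
    Matrix.det_kronecker]
  apply IsUnit.mul
  · apply IsUnit.pow
    rw [Matrix.det_transpose]
    exact (Matrix.det_vandermonde_ne_zero_iff.mpr hα).isUnit
  · apply IsUnit.pow
    rw [Matrix.det_transpose]
    exact (Matrix.det_vandermonde_ne_zero_iff.mpr hβ).isUnit

lemma code_card {q m : ℕ} (h2q : 2 ≤ q) (h2m : 2 ≤ m)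
    (α : Fin m → K) (hα : Function.Injective α)
    (β : Fin q → K) (hβ : Function.Injective β) (r : ℕ) :
    Module.finrank K (onePointCode q m α β r)
      = (Finset.univ.filter fun p : Fin m × Fin q =>
          (p.1 : ℕ) * q + (p.2 : ℕ) * m ≤ r).card := by
  classical
  have hli : LinearIndependent K (fun (p : Fin m × Fin q) (P : Fin m × Fin q) =>
      α P.1 ^ (p.1 : ℕ) * β P.2 ^ (p.2 : ℕ)) := bvec_li α hα β hβ
  set b : Fin m × Fin q → (Fin m × Fin q → K) :=
    fun p P => α P.1 ^ (p.1 : ℕ) * β P.2 ^ (p.2 : ℕ) with hbdef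
  have hspan : onePointCode q m α β r
      = Submodule.span K (b '' {p : Fin m × Fin q | (p.1 : ℕ) * q + (p.2 : ℕ) * m ≤ r}) := by
    apply le_antisymm
    · rw [onePointCode, Submodule.span_le]
      rintro w ⟨i, j, hj, hle, rfl⟩
      have hjq : j < q := by omega
      by_cases him : i < m
      · apply Submodule.subset_span
        refine ⟨(⟨i, him⟩, ⟨j, hjq⟩), ?_, rfl⟩
        simpa using hle
      · push_neg at him
        let L : (Fin m → K) →ₗ[K] (Fin m × Fin q → K) :=
          { toFun := fun g P => g P.1 * β P.2 ^ j
            map_add' := fun g h => by funext P; simp [add_mul]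
            map_smul' := fun c g => by funext P; simp [mul_assoc] }
        have hw : (fun P : Fin m × Fin q => α P.1 ^ i * β P.2 ^ j)
            = L (fun x => α x ^ i) := rfl
        rw [hw]
        haveI : Nonempty (Fin m) := ⟨⟨0, by omega⟩⟩
        have htop : Submodule.span K
            (Set.range fun (i' : Fin m) (x : Fin m) => α x ^ (i' : ℕ)) = ⊤ := by
          apply LinearIndependent.span_eq_top_of_card_eq_finrank (vandermonde_t_li α hα)
          simp [Module.finrank_fintype_fun_eq_card]
        have hmem : (fun x => α x ^ i) ∈ Submodule.span K
            (Set.range fun (i' : Fin m) (x : Fin m) => α x ^ (i' : ℕ)) := by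
          rw [htop]; trivial
        have h2 := Submodule.mem_map_of_mem (f := L) hmem
        rw [Submodule.map_span] at h2
        have hsub : (L '' Set.range fun (i' : Fin m) (x : Fin m) => α x ^ (i' : ℕ))
            ⊆ b '' {p : Fin m × Fin q | (p.1 : ℕ) * q + (p.2 : ℕ) * m ≤ r} := by
          rintro _ ⟨_, ⟨i', rfl⟩, rfl⟩
          refine ⟨(i', ⟨j, hjq⟩), ?_, rfl⟩
          have h3 : (i' : ℕ) * q ≤ i * q := Nat.mul_le_mul_right _ (by omega)
          simp only [Set.mem_setOf_eq]
          omega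
        exact Submodule.span_mono hsub h2
    · rw [onePointCode, Submodule.span_le]
      rintro _ ⟨pr, hp, rfl⟩
      simp only [Set.mem_setOf_eq] at hp
      apply Submodule.subset_span
      exact ⟨(pr.1 : ℕ), (pr.2 : ℕ), by omega, hp, rfl⟩
  rw [hspan, Set.image_eq_range]
  have hli2 : LinearIndependent K
      (fun x : {p : Fin m × Fin q | (p.1 : ℕ) * q + (p.2 : ℕ) * m ≤ r} => b ↑x) :=
    hli.comp _ Subtype.val_injective
  rw [finrank_span_eq_card hli2, ← Set.toFinset_card, Set.toFinset_setOf]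

end OnePointAux

/-- Dimension of the one-point code `C_r` of length `qm` on `y^q + μy = f(x)`:
if `0 ≤ r < qm` then `dim C_r = |H(r)|` where `H(b) = {u ∈ ⟨q,m⟩ : u ≤ b}`;
if `qm ≤ r ≤ 2qm - q - m - 1` then `dim C_r = qm - |H(2qm - q - m - 1 - r)|`;
and if `qm - q - m - 1 < r < qm` then `dim C_r = r + 1 - (q-1)(m-1)/2`. -/
theorem onePointCode_finrank {K : Type*} [Field K] [Fintype K]
    (p t : ℕ) (hp : p.Prime) [CharP K p] (q : ℕ) (hq : q = p ^ t) (ht : 1 ≤ t)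
    (m : ℕ) (hm : 2 ≤ m) (hmp : ¬ p ∣ m)
    (μ : K) (hμ : μ ≠ 0)
    (α : Fin m → K) (hα : Function.Injective α)
    (β : Fin q → K) (hβ : Function.Injective β) (hroot : ∀ j, β j ^ q + μ * β j = 0)
    (r : ℕ) :
    (r < q * m →
        Module.finrank K (onePointCode q m α β r) =
          Set.ncard {u : ℕ | (∃ i j : ℕ, u = i * q + j * m) ∧ u ≤ r}) ∧
      (q * m ≤ r → r ≤ 2 * q * m - q - m - 1 →
        Module.finrank K (onePointCode q m α β r) =
          q * m - Set.ncard {u : ℕ | (∃ i j : ℕ, u = i * q + j * m) ∧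
            u ≤ 2 * q * m - q - m - 1 - r}) ∧
      (q * m - q - m - 1 < r → r < q * m →
        Module.finrank K (onePointCode q m α β r) = r + 1 - (q - 1) * (m - 1) / 2) := by
  classical
  have h2q : 2 ≤ q := by
    rw [hq]
    calc 2 ≤ p := hp.two_le
    _ ≤ p ^ t := Nat.le_self_pow (by omega) p
  have hco : Nat.Coprime q m := by
    rw [hq]
    exact ((Nat.Prime.coprime_iff_not_dvd hp).mpr hmp).pow_left t
  have hqm := OnePointAux.qm_le h2q hm
  have hcard := OnePointAux.code_card h2q hm α hα β hβ
  -- counting pairs below a bound, as a finset of values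
  have hcnt : ∀ c : ℕ, c < q * m →
      (Finset.univ.filter fun pr : Fin m × Fin q =>
          (pr.1 : ℕ) * q + (pr.2 : ℕ) * m ≤ c).card
        = ((Finset.range (c + 1)).filter fun u => ∃ i j : ℕ, u = i * q + j * m).card := by
    intro c hc
    apply Finset.card_bij (fun pr _ => (pr.1 : ℕ) * q + (pr.2 : ℕ) * m)
    · intro a ha
      simp only [Finset.mem_filter, Finset.mem_univ, true_and, Finset.mem_range] at ha ⊢
      exact ⟨by omega, a.1, a.2, rfl⟩
    · intro a ha a' ha' h
      obtain ⟨h1, h2⟩ := OnePointAux.rep_inj hco (by omega) a.2.isLt a'.2.isLt h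
      exact Prod.ext (Fin.val_injective h1) (Fin.val_injective h2)
    · intro u hu
      simp only [Finset.mem_filter, Finset.mem_range] at hu
      obtain ⟨hlt, i, j, rfl⟩ := hu
      obtain ⟨i', j', hj', heq⟩ := OnePointAux.rep_reduce (show 0 < q by omega)
        (rfl : i * q + j * m = i * q + j * m)
      have hi' : i' < m := by
        by_contra hge
        push_neg at hge
        have h3 : m * q ≤ i' * q := Nat.mul_le_mul_right _ hge
        have h4 : q * m = m * q := mul_comm _ _
        omega
      refine ⟨(⟨i', hi'⟩, ⟨j', hj'⟩), ?_, heq.symm⟩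
      simp only [Finset.mem_filter, Finset.mem_univ, true_and]
      omega
  have hncard : ∀ c : ℕ, Set.ncard {u : ℕ | (∃ i j : ℕ, u = i * q + j * m) ∧ u ≤ c}
      = ((Finset.range (c + 1)).filter fun u => ∃ i j : ℕ, u = i * q + j * m).card := by
    intro c
    have hset : {u : ℕ | (∃ i j : ℕ, u = i * q + j * m) ∧ u ≤ c}
        = ↑((Finset.range (c + 1)).filter fun u => ∃ i j : ℕ, u = i * q + j * m) := by
      ext u
      simp [Nat.lt_succ_iff, and_comm]
    rw [hset, Set.ncard_coe_finset]
  refine ⟨?_, ?_, ?_⟩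
  · intro hr
    rw [hcard, hcnt r hr, hncard r]
  · intro hr1 hr2
    rw [hcard]
    have h2qm : 2 * q * m = 2 * (q * m) := by ring
    have hslt : 2 * q * m - q - m - 1 - r < q * m := by omega
    have hflip : (Finset.univ.filter fun pr : Fin m × Fin q =>
          ¬ ((pr.1 : ℕ) * q + (pr.2 : ℕ) * m ≤ r)).card
        = (Finset.univ.filter fun pr : Fin m × Fin q =>
          (pr.1 : ℕ) * q + (pr.2 : ℕ) * m ≤ 2 * q * m - q - m - 1 - r).card := by
      have key : ∀ pr : Fin m × Fin q,
          (((pr.1.rev : ℕ)) * q + ((pr.2.rev : ℕ)) * m) + ((pr.1 : ℕ) * q + (pr.2 : ℕ) * m)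
            = 2 * (q * m) - q - m := by
        intro pr
        have e1 : (pr.1.rev : ℕ) = m - ((pr.1 : ℕ) + 1) := Fin.val_rev pr.1
        have e2 : (pr.2.rev : ℕ) = q - ((pr.2 : ℕ) + 1) := Fin.val_rev pr.2
        have h1 : (pr.1 : ℕ) < m := pr.1.isLt
        have h2 : (pr.2 : ℕ) < q := pr.2.isLt
        rw [e1, e2]
        have e3 : (m - ((pr.1 : ℕ) + 1)) * q + (pr.1 : ℕ) * q = (m - 1) * q := by
          rw [← add_mul]
          congr 1
          omega
        have e4 : (q - ((pr.2 : ℕ) + 1)) * m + (pr.2 : ℕ) * m = (q - 1) * m := by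
          rw [← add_mul]
          congr 1
          omega
        have e5 : (m - 1) * q = m * q - q := by rw [Nat.sub_mul, one_mul]
        have e6 : (q - 1) * m = q * m - m := by rw [Nat.sub_mul, one_mul]
        have e7 : m * q = q * m := mul_comm m q
        omega
      apply Finset.card_nbij' (fun pr => (pr.1.rev, pr.2.rev)) (fun pr => (pr.1.rev, pr.2.rev))
      · intro a ha
        simp only [Finset.mem_coe, Finset.mem_filter, Finset.mem_univ, true_and] at ha ⊢
        have := key a
        omega
      · intro a ha
        simp only [Finset.mem_coe, Finset.mem_filter, Finset.mem_univ, true_and] at ha ⊢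
        have := key a
        omega
      · intro a _
        simp
      · intro a _
        simp
    have hpart := Finset.card_filter_add_card_filter_not
      (s := (Finset.univ : Finset (Fin m × Fin q)))
      (fun pr => (pr.1 : ℕ) * q + (pr.2 : ℕ) * m ≤ r)
    have huniv : (Finset.univ : Finset (Fin m × Fin q)).card = m * q := by simp
    have hmq : m * q = q * m := mul_comm m q
    rw [hcnt _ hslt, ← hncard] at hflip
    omega
  · intro hr1 hr2
    rw [hcard, hcnt r hr2]
    have hpart := Finset.card_filter_add_card_filter_not
      (s := Finset.range (r + 1)) (fun u => ∃ i j : ℕ, u = i * q + j * m)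
    rw [Finset.card_range] at hpart
    have hgaps := OnePointAux.gaps_card h2q hm hco
    have hfe : ((Finset.range (r + 1)).filter fun u => ¬ ∃ i j : ℕ, u = i * q + j * m)
        = ((Finset.range (q * m - q - m + 1)).filter
          fun u => ¬ ∃ i j : ℕ, u = i * q + j * m) := by
      ext u
      simp only [Finset.mem_filter, Finset.mem_range]
      constructor
      · rintro ⟨h4, h5⟩
        have := (OnePointAux.nongap h2q hm hco hqm h5).1
        exact ⟨by omega, h5⟩
      · rintro ⟨h4, h5⟩
        exact ⟨by omega, h5⟩
    rw [hfe, hgaps] at hpart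
    omega
end

section
/- Let q, m ≥ 2 be coprime. If 1 ≤ r < qm and r (or qm − r) is of the form iq with 0 ≤ i, or jm with 0 ≤ j ≤ q−1 (with the other coordinate zero), then the minimum distance of the one-point code C_r = C_L(D, rQ_∞) is exactly qm − r. -/
open Finset Polynomial in
/-- Counting points of an injective tuple where a nonzero polynomial vanishes. -/
lemma aux_card_eval_zero_le {K : Type*} [Field K] [DecidableEq K] {n : ℕ}
    {γ : Fin n → K} (hγ : Function.Injective γ) {g : K[X]} (hg : g ≠ 0) :
    ((univ : Finset (Fin n)).filter fun a => g.eval (γ a) = 0).card ≤ g.natDegree := by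
  calc ((univ : Finset (Fin n)).filter fun a => g.eval (γ a) = 0).card
      ≤ g.roots.toFinset.card := by
        apply Finset.card_le_card_of_injOn γ
        · intro a ha
          simp only [mem_coe, mem_filter] at ha
          simp [Multiset.mem_toFinset, mem_roots', hg, IsRoot, ha.2]
        · exact hγ.injOn
    _ ≤ Multiset.card g.roots := Multiset.toFinset_card_le _
    _ ≤ g.natDegree := card_roots' g

open Finset Polynomial in
/-- Every codeword is the evaluation of a bivariate polynomial whose monomials
`xⁱyʲ` satisfy `j ≤ q-1` and `iq + jm ≤ r`. -/
lemma aux_mem_code_poly {K : Type*} [Field K] {q m r : ℕ} {α : Fin m → K} {β : Fin q → K}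
    {v : Fin m × Fin q → K} (hv : v ∈ onePointCode q m α β r) :
    ∃ F : Polynomial (Polynomial K),
      (∀ j i : ℕ, (F.coeff j).coeff i ≠ 0 → j ≤ q - 1 ∧ i * q + j * m ≤ r) ∧
      ∀ P : Fin m × Fin q, v P = Polynomial.eval₂ (Polynomial.evalRingHom (α P.1)) (β P.2) F := by
  refine Submodule.span_induction ?_ ?_ ?_ ?_ hv
  · rintro w ⟨i, j, hjq, hijr, rfl⟩
    refine ⟨Polynomial.monomial j ((X : K[X]) ^ i), ?_, ?_⟩
    · intro j' i' hne
      rw [coeff_monomial] at hne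
      by_cases h : j = j'
      · subst h
        rw [if_pos rfl] at hne
        rw [coeff_X_pow] at hne
        have : i = i' := by
          by_contra hc; rw [if_neg (fun h => hc h.symm)] at hne; simp at hne
        subst this; exact ⟨hjq, hijr⟩
      · simp [h] at hne
    · intro P
      simp [eval₂_monomial]
  · exact ⟨0, by simp, by simp⟩
  · rintro x y hx hy ⟨F, hF, hFe⟩ ⟨G, hG, hGe⟩
    refine ⟨F + G, ?_, ?_⟩
    · intro j i hne
      rw [coeff_add, coeff_add] at hne
      rcases (by by_contra hc; push_neg at hc; simp [hc.1, hc.2] at hne :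
        (F.coeff j).coeff i ≠ 0 ∨ (G.coeff j).coeff i ≠ 0) with h | h
      · exact hF j i h
      · exact hG j i h
    · intro P; simp [eval₂_add, Pi.add_apply, hFe P, hGe P]
  · rintro c x hx ⟨F, hF, hFe⟩
    refine ⟨Polynomial.C (Polynomial.C c) * F, ?_, ?_⟩
    · intro j i hne
      rw [← Polynomial.smul_eq_C_mul] at hne
      have h1 : ((Polynomial.C c • F).coeff j).coeff i = c * (F.coeff j).coeff i := by
        rw [Polynomial.coeff_smul]
        simp [Polynomial.smul_eq_C_mul, Polynomial.coeff_C_mul]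
      rw [h1] at hne
      exact hF j i (fun h => hne (by simp [h]))
    · intro P
      rw [eval₂_mul, eval₂_C]
      simp [Pi.smul_apply, hFe P, smul_eq_mul]

open Finset Polynomial in
/-- The footprint bound: a nonzero polynomial with monomial support satisfying
`iq + jm ≤ r` vanishes at no more than `r` points of the grid. -/
lemma aux_zeros_le {K : Type*} [Field K] [DecidableEq K] {q m r : ℕ}
    {α : Fin m → K} {β : Fin q → K} (hα : Function.Injective α) (hβ : Function.Injective β)
    {F : Polynomial (Polynomial K)}
    (hF : ∀ j i : ℕ, (F.coeff j).coeff i ≠ 0 → j ≤ q - 1 ∧ i * q + j * m ≤ r)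
    (hne : F ≠ 0) :
    ((univ : Finset (Fin m × Fin q)).filter fun P =>
      Polynomial.eval₂ (Polynomial.evalRingHom (α P.1)) (β P.2) F = 0).card ≤ r := by
  set j0 := F.natDegree with hj0
  have hg : F.coeff j0 ≠ 0 := by
    rw [hj0, Polynomial.coeff_natDegree]
    exact Polynomial.leadingCoeff_ne_zero.mpr hne
  set g := F.coeff j0 with hgdef
  set d := g.natDegree with hd
  have hlead : g.coeff d ≠ 0 := by
    rw [hd, Polynomial.coeff_natDegree]
    exact Polynomial.leadingCoeff_ne_zero.mpr hg
  obtain ⟨hjq, hdr⟩ := hF j0 d hlead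
  have row : ∀ a : Fin m,
      ((univ : Finset (Fin q)).filter fun b =>
        Polynomial.eval₂ (Polynomial.evalRingHom (α a)) (β b) F = 0).card
        ≤ if g.eval (α a) = 0 then q else j0 := by
    intro a
    by_cases h : g.eval (α a) = 0
    · rw [if_pos h]
      calc ((univ : Finset (Fin q)).filter fun b =>
            Polynomial.eval₂ (Polynomial.evalRingHom (α a)) (β b) F = 0).card
          ≤ (univ : Finset (Fin q)).card := Finset.card_filter_le _ _
        _ = q := by simp
    · rw [if_neg h]
      set h' := F.map (Polynomial.evalRingHom (α a)) with hh
      have hcoeff : h'.coeff j0 = g.eval (α a) := by simp [hh, Polynomial.coeff_map, hgdef]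
      have hne' : h' ≠ 0 := fun hz => h (by rw [← hcoeff, hz, Polynomial.coeff_zero])
      have hfeq : ((univ : Finset (Fin q)).filter fun b =>
            Polynomial.eval₂ (Polynomial.evalRingHom (α a)) (β b) F = 0)
          = ((univ : Finset (Fin q)).filter fun b => h'.eval (β b) = 0) :=
        Finset.filter_congr fun b _ => by rw [Polynomial.eval₂_eq_eval_map]
      rw [hfeq]
      calc ((univ : Finset (Fin q)).filter fun b => h'.eval (β b) = 0).card
          ≤ h'.natDegree := aux_card_eval_zero_le hβ hne'
        _ ≤ j0 := Polynomial.natDegree_map_le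
  have hcount : ((univ : Finset (Fin m × Fin q)).filter fun P =>
      Polynomial.eval₂ (Polynomial.evalRingHom (α P.1)) (β P.2) F = 0).card
      = ∑ a : Fin m, ((univ : Finset (Fin q)).filter fun b =>
          Polynomial.eval₂ (Polynomial.evalRingHom (α a)) (β b) F = 0).card := by
    rw [Finset.card_filter, Fintype.sum_prod_type]
    exact Finset.sum_congr rfl fun a _ => (Finset.card_filter _ _).symm
  rw [hcount]
  calc ∑ a : Fin m, ((univ : Finset (Fin q)).filter fun b =>
          Polynomial.eval₂ (Polynomial.evalRingHom (α a)) (β b) F = 0).card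
      ≤ ∑ a : Fin m, (if g.eval (α a) = 0 then q else j0) :=
        Finset.sum_le_sum fun a _ => row a
    _ = ((univ : Finset (Fin m)).filter fun a => g.eval (α a) = 0).card * q
        + ((univ : Finset (Fin m)).filter fun a => ¬ g.eval (α a) = 0).card * j0 := by
        rw [Finset.sum_ite]
        simp [Finset.sum_const, smul_eq_mul]
    _ ≤ d * q + m * j0 := by
        refine Nat.add_le_add (Nat.mul_le_mul ?_ le_rfl) (Nat.mul_le_mul ?_ le_rfl)
        · exact aux_card_eval_zero_le hα hg
        · calc ((univ : Finset (Fin m)).filter fun a => ¬ g.eval (α a) = 0).card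
              ≤ (univ : Finset (Fin m)).card := Finset.card_filter_le _ _
            _ = m := by simp
    _ = d * q + j0 * m := by ring
    _ ≤ r := hdr

open Finset in
lemma aux_card_val_lt {n i : ℕ} (h : i ≤ n) :
    ((univ : Finset (Fin n)).filter fun a => a.val < i).card = i := by
  have key : ((univ : Finset (Fin n)).filter fun a => a.val < i).card = (Finset.range i).card :=
    Finset.card_bij' (fun a _ => a.val)
      (fun b hb => ⟨b, lt_of_lt_of_le (Finset.mem_range.mp hb) h⟩)
      (fun a ha => Finset.mem_range.mpr (Finset.mem_filter.mp ha).2)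
      (fun b hb => Finset.mem_filter.mpr ⟨Finset.mem_univ _, Finset.mem_range.mp hb⟩)
      (fun a _ => rfl) (fun b _ => rfl)
  rw [key, Finset.card_range]

open Finset Polynomial in
/-- A polynomial of degree `≤ i` vanishing exactly at the first `i` of the `γ`'s. -/
lemma aux_vanish {K : Type*} [Field K] [DecidableEq K] {n : ℕ} {γ : Fin n → K}
    (hγ : Function.Injective γ) (i : ℕ) :
    ∃ g : K[X], g.natDegree ≤ i ∧ ∀ c : Fin n, (g.eval (γ c) = 0 ↔ c.val < i) := by
  set S := (univ : Finset (Fin n)).filter fun a => a.val < i with hS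
  have hcard : S.card ≤ i := by
    calc S.card = (S.image Fin.val).card := (Finset.card_image_of_injective _ Fin.val_injective).symm
      _ ≤ (Finset.range i).card := by
          apply Finset.card_le_card
          intro x hx
          obtain ⟨a, ha, rfl⟩ := Finset.mem_image.mp hx
          exact Finset.mem_range.mpr (Finset.mem_filter.mp ha).2
      _ = i := Finset.card_range i
  refine ⟨∏ a ∈ S, (X - C (γ a)), ?_, ?_⟩
  · calc (∏ a ∈ S, (X - C (γ a))).natDegree ≤ ∑ a ∈ S, (X - C (γ a)).natDegree :=
        Polynomial.natDegree_prod_le _ _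
      _ = ∑ a ∈ S, 1 := Finset.sum_congr rfl fun a _ => Polynomial.natDegree_X_sub_C _
      _ = S.card := by simp
      _ ≤ i := hcard
  · intro c
    rw [Polynomial.eval_prod]
    constructor
    · intro h0
      obtain ⟨a, haS, ha0⟩ := Finset.prod_eq_zero_iff.mp h0
      simp only [Polynomial.eval_sub, Polynomial.eval_X, Polynomial.eval_C] at ha0
      have : c = a := hγ (by linear_combination ha0)
      subst this
      exact (Finset.mem_filter.mp haS).2
    · intro hc
      exact Finset.prod_eq_zero (i := c)
        (Finset.mem_filter.mpr ⟨Finset.mem_univ _, hc⟩) (by simp)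

open Finset Polynomial in
lemma aux_exists_x {K : Type*} [Field K] [DecidableEq K] {q m r : ℕ}
    {α : Fin m → K} {β : Fin q → K} (hα : Function.Injective α)
    {i : ℕ} (him : i < m) (hr : r = i * q) :
    ∃ v ∈ onePointCode q m α β r,
      ((univ : Finset (Fin m × Fin q)).filter fun P => v P ≠ 0).card = q * m - r := by
  obtain ⟨g, hdeg, hzero⟩ := aux_vanish hα i
  refine ⟨fun P => g.eval (α P.1), ?_, ?_⟩
  · have hsum : (fun P : Fin m × Fin q => g.eval (α P.1)) = ∑ a ∈ Finset.range (i+1),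
        g.coeff a • (fun P : Fin m × Fin q => α P.1 ^ a * β P.2 ^ 0) := by
      funext P
      rw [Finset.sum_apply]
      simp only [Pi.smul_apply, smul_eq_mul, pow_zero, mul_one]
      exact Polynomial.eval_eq_sum_range' (Nat.lt_succ_of_le hdeg) _
    rw [hsum]
    apply Submodule.sum_mem
    intro a ha
    apply Submodule.smul_mem
    apply Submodule.subset_span
    refine ⟨a, 0, Nat.zero_le _, ?_, rfl⟩
    have haa : a ≤ i := Nat.lt_succ_iff.mp (Finset.mem_range.mp ha)
    calc a * q + 0 * m = a * q := by ring
      _ ≤ i * q := Nat.mul_le_mul haa le_rfl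
      _ = r := hr.symm
  · have hfe : ((univ : Finset (Fin m × Fin q)).filter fun P => g.eval (α P.1) ≠ 0)
        = ((univ : Finset (Fin m)).filter fun a => ¬ a.val < i) ×ˢ (univ : Finset (Fin q)) := by
      ext P
      rw [Finset.mem_filter, Finset.mem_product, Finset.mem_filter]
      constructor
      · intro h
        exact ⟨⟨Finset.mem_univ _, fun hlt => h.2 ((hzero P.1).mpr hlt)⟩, Finset.mem_univ _⟩
      · rintro ⟨⟨-, h1⟩, -⟩
        exact ⟨Finset.mem_univ _, fun h0 => h1 ((hzero P.1).mp h0)⟩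
    rw [hfe, Finset.card_product]
    have h2 : ((univ : Finset (Fin m)).filter fun a => ¬ a.val < i).card = m - i := by
      have h3 := Finset.card_filter_add_card_filter_not
        (s := (univ : Finset (Fin m))) (p := fun a => a.val < i)
      have h4 := aux_card_val_lt (n := m) (le_of_lt him)
      have h5 : (univ : Finset (Fin m)).card = m := by simp
      omega
    rw [h2, hr]
    simp only [Finset.card_univ, Fintype.card_fin]
    rw [Nat.sub_mul, Nat.mul_comm m q]

open Finset Polynomial in
lemma aux_exists_y {K : Type*} [Field K] [DecidableEq K] {q m r : ℕ} (hq1 : 1 ≤ q)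
    {α : Fin m → K} {β : Fin q → K} (hβ : Function.Injective β)
    {j : ℕ} (hjq : j ≤ q - 1) (hr : r = j * m) :
    ∃ v ∈ onePointCode q m α β r,
      ((univ : Finset (Fin m × Fin q)).filter fun P => v P ≠ 0).card = q * m - r := by
  obtain ⟨g, hdeg, hzero⟩ := aux_vanish hβ j
  refine ⟨fun P => g.eval (β P.2), ?_, ?_⟩
  · have hsum : (fun P : Fin m × Fin q => g.eval (β P.2)) = ∑ b ∈ Finset.range (j+1),
        g.coeff b • (fun P : Fin m × Fin q => α P.1 ^ 0 * β P.2 ^ b) := by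
      funext P
      rw [Finset.sum_apply]
      simp only [Pi.smul_apply, smul_eq_mul, pow_zero, one_mul]
      exact Polynomial.eval_eq_sum_range' (Nat.lt_succ_of_le hdeg) _
    rw [hsum]
    apply Submodule.sum_mem
    intro b hb
    apply Submodule.smul_mem
    apply Submodule.subset_span
    have hbb : b ≤ j := Nat.lt_succ_iff.mp (Finset.mem_range.mp hb)
    refine ⟨0, b, le_trans hbb hjq, ?_, rfl⟩
    calc 0 * q + b * m = b * m := by ring
      _ ≤ j * m := Nat.mul_le_mul hbb le_rfl
      _ = r := hr.symm
  · have hfe : ((univ : Finset (Fin m × Fin q)).filter fun P => g.eval (β P.2) ≠ 0)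
        = (univ : Finset (Fin m)) ×ˢ ((univ : Finset (Fin q)).filter fun b => ¬ b.val < j) := by
      ext P
      rw [Finset.mem_filter, Finset.mem_product, Finset.mem_filter]
      constructor
      · intro h
        exact ⟨Finset.mem_univ _, Finset.mem_univ _, fun hlt => h.2 ((hzero P.2).mpr hlt)⟩
      · rintro ⟨-, -, h1⟩
        exact ⟨Finset.mem_univ _, fun h0 => h1 ((hzero P.2).mp h0)⟩
    rw [hfe, Finset.card_product]
    have hjq' : j ≤ q := le_trans hjq (Nat.sub_le _ _)
    have h2 : ((univ : Finset (Fin q)).filter fun b => ¬ b.val < j).card = q - j := by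
      have h3 := Finset.card_filter_add_card_filter_not
        (s := (univ : Finset (Fin q))) (p := fun b => b.val < j)
      have h4 := aux_card_val_lt (n := q) hjq'
      have h5 : (univ : Finset (Fin q)).card = q := by simp
      omega
    rw [h2, hr]
    simp only [Finset.card_univ, Fintype.card_fin]
    rw [Nat.mul_comm m (q - j), Nat.sub_mul]

open Finset in
/-- If `1 ≤ r < qm` and `r` (or `qm - r`) has property (*) — i.e. it is of the form `iq`
with `i ≥ 0`, or `jm` with `0 ≤ j ≤ q - 1` — then the minimum distance of the one-point
code `C_r` is exactly `qm - r`: every nonzero codeword has Hamming weight `≥ qm - r`,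
and some codeword has weight exactly `qm - r`. -/
theorem onePointCode_minDist {K : Type*} [Field K] [Fintype K] [DecidableEq K]
    (p t : ℕ) (hp : p.Prime) [CharP K p] (q : ℕ) (hq : q = p ^ t) (ht : 1 ≤ t)
    (m : ℕ) (hm : 2 ≤ m) (hmp : ¬ p ∣ m) (hco : Nat.Coprime q m)
    (μ : K) (hμ : μ ≠ 0)
    (α : Fin m → K) (hα : Function.Injective α)
    (β : Fin q → K) (hβ : Function.Injective β) (hroot : ∀ j, β j ^ q + μ * β j = 0)
    (r : ℕ) (hr1 : 1 ≤ r) (hr2 : r < q * m)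
    (hstar : ((∃ i : ℕ, r = i * q) ∨ (∃ j : ℕ, j ≤ q - 1 ∧ r = j * m)) ∨
      ((∃ i : ℕ, q * m - r = i * q) ∨ (∃ j : ℕ, j ≤ q - 1 ∧ q * m - r = j * m))) :
    (∀ v ∈ onePointCode q m α β r, v ≠ 0 →
        q * m - r ≤ (univ.filter fun P => v P ≠ 0).card) ∧
      (∃ v ∈ onePointCode q m α β r,
        (univ.filter fun P => v P ≠ 0).card = q * m - r) := by
  have hq1 : 1 ≤ q := by
    rw [hq]; exact Nat.one_le_pow _ _ hp.pos
  constructor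
  · intro v hv hvne
    obtain ⟨F, hF, hFe⟩ := aux_mem_code_poly hv
    have hFne : F ≠ 0 := by
      intro h0
      apply hvne
      funext P
      rw [hFe P, h0, Polynomial.eval₂_zero]; rfl
    have hz := aux_zeros_le hα hβ hF hFne
    have hcard : ((univ : Finset (Fin m × Fin q)).filter fun P => v P = 0).card ≤ r := by
      have heq : ((univ : Finset (Fin m × Fin q)).filter fun P => v P = 0)
          = ((univ : Finset (Fin m × Fin q)).filter fun P =>
              Polynomial.eval₂ (Polynomial.evalRingHom (α P.1)) (β P.2) F = 0) :=
        Finset.filter_congr fun P _ => by rw [hFe P]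
      rw [heq]; exact hz
    have hsplit := Finset.card_filter_add_card_filter_not
      (s := (univ : Finset (Fin m × Fin q))) (p := fun P => v P = 0)
    have hne_eq : ((univ : Finset (Fin m × Fin q)).filter fun P => v P ≠ 0)
        = ((univ : Finset (Fin m × Fin q)).filter fun P => ¬ v P = 0) := by
      simp only [ne_eq]
    have huniv : (univ : Finset (Fin m × Fin q)).card = m * q := by simp
    have hqm : q * m = m * q := Nat.mul_comm _ _
    rw [hne_eq]
    omega
  · have hred : (∃ i, i < m ∧ r = i * q) ∨ (∃ j, j ≤ q - 1 ∧ r = j * m) := by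
      rcases hstar with (⟨i, hi⟩ | ⟨j, hj1, hj2⟩) | (⟨i, hi⟩ | ⟨j, hj1, hj2⟩)
      · left; refine ⟨i, ?_, hi⟩
        by_contra hc; push_neg at hc
        have : q * m ≤ i * q := by
          calc q * m = m * q := Nat.mul_comm _ _
            _ ≤ i * q := Nat.mul_le_mul hc le_rfl
        omega
      · right; exact ⟨j, hj1, hj2⟩
      · left
        have hipos : 1 ≤ i := by
          rcases Nat.eq_zero_or_pos i with h0 | h1
          · exfalso; rw [h0, Nat.zero_mul] at hi; omega
          · exact h1
        have hile : i ≤ m := by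
          by_contra hc; push_neg at hc
          have : q * m ≤ i * q := by
            calc q * m = m * q := Nat.mul_comm _ _
              _ ≤ i * q := Nat.mul_le_mul (le_of_lt hc) le_rfl
          omega
        refine ⟨m - i, by omega, ?_⟩
        have hsm : (m - i) * q = m * q - i * q := Nat.sub_mul _ _ _
        rw [hsm, Nat.mul_comm m q]
        omega
      · right
        have hjpos : 1 ≤ j := by
          rcases Nat.eq_zero_or_pos j with h0 | h1
          · exfalso; rw [h0, Nat.zero_mul] at hj2; omega
          · exact h1
        refine ⟨q - j, by omega, ?_⟩
        have hsm : (q - j) * m = q * m - j * m := Nat.sub_mul _ _ _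
        rw [hsm]
        omega
    rcases hred with ⟨i, him, hri⟩ | ⟨j, hjq', hrj⟩
    · exact aux_exists_x hα him hri
    · exact aux_exists_y hq1 hβ hjq' hrj
end
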